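/- arXiv:1907.08581 — 4 statements merged into one kernel-verified Lean document; each statement's English description precedes it below -/
import Mathlib

section
/- Suppose θ ≤ ν are cardinals with ν regular uncountable, cf(θ) < θ, and for every regular μ < θ one has 𝒞(ν,μ) ≤ ν. Then 𝒞(ν,θ) ≤ 𝒟(ν,cf(θ)). -/
open Cardinal Set Ordinal

/-- `C` is unbounded in `α`. -/
def UnbIn (C : Set Ordinal) (α : Ordinal) : Prop :=
  ∀ β < α, ∃ γ ∈ C, β < γ ∧ γ < α

/-- `C` is closed in `α`: every nonzero limit point of `C` below `α` belongs to `C`. -/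
def ClosedIn (C : Set Ordinal) (α : Ordinal) : Prop :=
  ∀ β < α, 0 < β → UnbIn C β → β ∈ C

/-- `C` is a club (closed unbounded) subset of `α`. -/
def ClubIn (C : Set Ordinal) (α : Ordinal) : Prop :=
  C ⊆ Set.Iio α ∧ ClosedIn C α ∧ UnbIn C α

/-- `S` is stationary in `α`. -/
def StatIn (S : Set Ordinal) (α : Ordinal) : Prop :=
  ∀ C, ClubIn C α → (S ∩ C).Nonempty

/-- The trace of `S` below `κ`: ordinals of uncountable cofinality in which `S` reflects. -/
def Tr (κ : Ordinal) (S : Set Ordinal) : Set Ordinal :=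
  {β | β < κ ∧ Cardinal.aleph0 < β.cof ∧ StatIn (S ∩ Set.Iio β) β}

/-- `E^κ_θ`, the set of ordinals below `κ` of cofinality `θ`. -/
def Ecof (κ : Ordinal) (θ : Cardinal) : Set Ordinal :=
  {α | α < κ ∧ α.cof = θ}

/-- The set of accumulation points of `C` that belong to `C`. -/
def accSet (C : Set Ordinal) : Set Ordinal :=
  {β ∈ C | 0 < β ∧ UnbIn C β}

/-- The order type of a set of ordinals: the unique ordinal whose initial segment
order-embeds onto the set. -/
noncomputable def otp (x : Set Ordinal) : Ordinal :=
  sInf {o : Ordinal | ∃ f : Ordinal → Ordinal,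
    StrictMonoOn f (Set.Iio o) ∧ f '' Set.Iio o = x}

/-- The partition principle `Prt(S, θ, T)` (computed inside `κ`). -/
def Prt (κ : Ordinal) (S : Set Ordinal) (θ : Cardinal) (T : Set Ordinal) : Prop :=
  ∃ P : Ordinal → Set Ordinal,
    (∀ i < θ.ord, P i ⊆ S) ∧
    Set.PairwiseDisjoint (Set.Iio θ.ord) P ∧
    (S ⊆ ⋃ i ∈ Set.Iio θ.ord, P i) ∧
    StatIn (T ∩ ⋂ i ∈ Set.Iio θ.ord, Tr κ (P i)) κ

/-- The principle `SNR⁻(κ, ν, T)`. -/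
def SNRm (κ : Ordinal) (ν : Cardinal) (T : Set Ordinal) : Prop :=
  ∀ T₀ ⊆ T ∩ Ecof κ ν, StatIn T₀ κ →
    ∃ φ : Ordinal → Ordinal, (∀ β < κ, φ β < ν.ord) ∧
      StatIn {α ∈ T₀ | ∃ c, ClubIn c α ∧ StrictMonoOn φ c} κ

/-- The simultaneous partition principle `Prp(S, ν, T)` (computed inside `κ`). -/
def Prp (κ : Ordinal) (S : Set Ordinal) (ν : Cardinal) (T : Set Ordinal) : Prop :=
  ∀ θ : Cardinal, θ ≤ ν →
    ∀ Si : Ordinal → Set Ordinal, (∀ i < θ.ord, Si i ⊆ S) →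
      ∀ T' ⊆ T ∩ ⋂ i ∈ Set.Iio θ.ord, Tr κ (Si i), StatIn T' κ →
        ∃ I : Set Ordinal, I ⊆ Set.Iio θ.ord ∧ (∀ j < θ.ord, ∃ i ∈ I, j ≤ i) ∧
          ∃ S' : Ordinal → Set Ordinal,
            (∀ i ∈ I, S' i ⊆ Si i) ∧
            (∀ i ∈ I, StatIn (S' i) κ) ∧
            Set.PairwiseDisjoint I S' ∧
            StatIn (T' ∩ ⋂ i ∈ I, Tr κ (S' i)) κ

/-- `⟨lams, f⟩` is a scale for the singular cardinal `lam`. -/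
def IsScale (lam : Cardinal) (lams : Ordinal → Cardinal) (f : Ordinal → Ordinal → Ordinal) : Prop :=
  (∀ i < lam.ord.cof.ord, (lams i).IsRegular) ∧
  (∀ i < lam.ord.cof.ord, ∀ j < lam.ord.cof.ord, i < j → lams i < lams j) ∧
  (∀ i < lam.ord.cof.ord, lams i < lam) ∧
  (∀ c < lam, ∃ i < lam.ord.cof.ord, c < lams i) ∧
  (∀ γ < (Order.succ lam).ord, ∀ i < lam.ord.cof.ord, f γ i < (lams i).ord) ∧
  (∀ γ < (Order.succ lam).ord, ∀ δ < (Order.succ lam).ord, γ < δ →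
    ∃ i < lam.ord.cof.ord, ∀ j, i ≤ j → j < lam.ord.cof.ord → f γ j < f δ j) ∧
  (∀ g : Ordinal → Ordinal, (∀ i < lam.ord.cof.ord, g i < (lams i).ord) →
    ∃ γ < (Order.succ lam).ord, ∃ i < lam.ord.cof.ord,
      ∀ j, i ≤ j → j < lam.ord.cof.ord → g j < f γ j)

/-- `α` is a very good point of the scale `f`. -/
def VeryGoodAt (lam : Cardinal) (f : Ordinal → Ordinal → Ordinal) (α : Ordinal) : Prop :=
  ∃ C, ClubIn C α ∧ ∃ i < lam.ord.cof.ord,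
    ∀ γ ∈ C, ∀ δ ∈ C, γ < δ → ∀ j, i ≤ j → j < lam.ord.cof.ord → f γ j < f δ j

/-- The least size of a family of `θ`-sized subsets of `ν` such that every club
in `ν` contains a member of the family. -/
noncomputable def CC (ν θ : Cardinal) : Cardinal :=
  sInf { c : Cardinal | ∃ 𝒞 : Ordinal → Set Ordinal,
    (∀ i < c.ord, 𝒞 i ⊆ Set.Iio ν.ord ∧ (otp (𝒞 i)).card = θ) ∧
    ∀ b, ClubIn b ν.ord → ∃ i < c.ord, 𝒞 i ⊆ b }

/-- `𝒟(ν, μ) = cf([ν]^μ, ⊇)`: the least size of a family of `μ`-sized subsets of `ν`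
such that every `μ`-sized subset of `ν` contains a member of the family. -/
noncomputable def DD (ν μ : Cardinal) : Cardinal :=
  sInf { c : Cardinal | ∃ 𝒟 : Ordinal → Set Ordinal,
    (∀ i < c.ord, 𝒟 i ⊆ Set.Iio ν.ord ∧ (otp (𝒟 i)).card = μ) ∧
    ∀ a : Set Ordinal, a ⊆ Set.Iio ν.ord → (otp a).card = μ → ∃ i < c.ord, 𝒟 i ⊆ a }


universe u v

section Helpers

lemma not_bddAbove_union_Ici {x : Set Ordinal.{u}} {b : Ordinal.{u}} :
    ¬ BddAbove (x ∪ Set.Ici b) := by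
  rintro ⟨c, hc⟩
  have h1 : max b (c + 1) ∈ x ∪ Set.Ici b := Or.inr (Set.mem_Ici.2 (le_max_left _ _))
  have h2 := hc h1
  have h3 : c < max b (c+1) := lt_of_lt_of_le (Order.lt_succ c) (le_max_right _ _)
  exact absurd h2 (not_le.2 h3)

lemma exists_otp_witness {x : Set Ordinal.{u}} {b : Ordinal.{u}} (hx : x ⊆ Set.Iio b) :
    ∃ o : Ordinal.{u}, ∃ f : Ordinal.{u} → Ordinal.{u},
      StrictMonoOn f (Set.Iio o) ∧ f '' Set.Iio o = x := by
  set s := x ∪ Set.Ici b with hs_def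
  have hs : ¬ BddAbove s := not_bddAbove_union_Ici
  have hbs : b ∈ s := Or.inr (Set.mem_Ici.2 le_rfl)
  obtain ⟨ob, hob⟩ := Ordinal.enumOrd_surjective hs hbs
  have hTne : {o : Ordinal.{u} | b ≤ Ordinal.enumOrd s o}.Nonempty := ⟨ob, hob.ge⟩
  refine ⟨sInf {o : Ordinal.{u} | b ≤ Ordinal.enumOrd s o}, Ordinal.enumOrd s,
    (Ordinal.enumOrd_strictMono hs).strictMonoOn _, ?_⟩
  have hoin : b ≤ Ordinal.enumOrd s (sInf {o : Ordinal.{u} | b ≤ Ordinal.enumOrd s o}) :=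
    csInf_mem hTne
  apply Set.Subset.antisymm
  · rintro ξ ⟨o', ho', rfl⟩
    have ho'2 : o' < sInf {o : Ordinal.{u} | b ≤ Ordinal.enumOrd s o} := ho'
    have hno : ¬ b ≤ Ordinal.enumOrd s o' := by
      intro h
      exact absurd (csInf_le' (show o' ∈ {o : Ordinal.{u} | b ≤ Ordinal.enumOrd s o} from h))
        (not_le.2 ho'2)
    rcases Ordinal.enumOrd_mem hs o' with h | h
    · exact h
    · exact absurd (Set.mem_Ici.1 h) hno
  · intro ξ hξ
    obtain ⟨o', rfl⟩ := Ordinal.enumOrd_surjective hs (Or.inl hξ)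
    refine ⟨o', ?_, rfl⟩
    have h4 : Ordinal.enumOrd s o' <
        Ordinal.enumOrd s (sInf {o : Ordinal.{u} | b ≤ Ordinal.enumOrd s o}) :=
      lt_of_lt_of_le (hx hξ) hoin
    exact (Ordinal.enumOrd_strictMono hs).lt_iff_lt.mp h4

lemma otp_spec_card {x : Set Ordinal.{u}} {o : Ordinal.{u}} {f : Ordinal.{u} → Ordinal.{u}}
    (hf : StrictMonoOn f (Set.Iio o)) (hfx : f '' Set.Iio o = x) :
    #x = Cardinal.lift.{u+1, u} o.card := by
  rw [← hfx, Cardinal.mk_image_eq_of_injOn _ _ hf.injOn, Ordinal.mk_Iio_ordinal]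

lemma otp_card {x : Set Ordinal.{u}} {b : Ordinal.{u}} (hx : x ⊆ Set.Iio b) :
    Cardinal.lift.{u+1, u} (otp x).card = #x := by
  obtain ⟨o, f, h1, h2⟩ := exists_otp_witness hx
  have hne : {o : Ordinal.{u} | ∃ f : Ordinal.{u} → Ordinal.{u},
      StrictMonoOn f (Set.Iio o) ∧ f '' Set.Iio o = x}.Nonempty := ⟨o, f, h1, h2⟩
  obtain ⟨f', h1', h2'⟩ := csInf_mem hne
  exact (otp_spec_card h1' h2').symm

lemma otp_card_eq {x : Set Ordinal.{u}} {b : Ordinal.{u}} (hx : x ⊆ Set.Iio b) {μ : Cardinal.{u}}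
    (hc : #x = Cardinal.lift.{u+1, u} μ) : (otp x).card = μ := by
  have h := otp_card hx
  rw [hc] at h
  exact Cardinal.lift_injective h

lemma mk_of_otp {x : Set Ordinal.{u}} {b : Ordinal.{u}} (hx : x ⊆ Set.Iio b) {μ : Cardinal.{u}}
    (hc : (otp x).card = μ) : #x = Cardinal.lift.{u+1, u} μ := by
  rw [← hc]; exact (otp_card hx).symm

lemma otp_Iio (μ : Cardinal.{u}) : (otp (Set.Iio μ.ord)).card = μ :=
  otp_card_eq (le_refl _) (by rw [Ordinal.mk_Iio_ordinal, Cardinal.card_ord])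

lemma club_subset {ν : Cardinal.{u}} (hν : ν.IsRegular) {b : Set Ordinal.{u}}
    (hub : UnbIn b ν.ord) {μ : Cardinal.{u}} (hμ : μ ≤ ν) :
    ∃ x : Set Ordinal.{u}, x ⊆ b ∧ #x = Cardinal.lift.{u+1, u} μ := by
  set s := b ∪ Set.Ici ν.ord with hs_def
  have hs : ¬ BddAbove s := not_bddAbove_union_Ici
  have key : ∀ o < ν.ord, Ordinal.enumOrd s o < ν.ord := by
    intro o ho
    induction o using Ordinal.induction with
    | h o IH =>
      have hsup : Ordinal.bsup.{u,u} o (fun o' _ => Ordinal.enumOrd s o') < ν.ord := by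
        apply Ordinal.bsup_lt_ord
        · rw [hν.cof_eq]; exact (Cardinal.lt_ord.1 ho)
        · intro i hi; exact IH i hi (hi.trans ho)
      obtain ⟨γ, hγb, hγ1, hγ2⟩ := hub _ hsup
      have hle : Ordinal.enumOrd s o ≤ γ := by
        apply Ordinal.enumOrd_le_of_forall_lt (Or.inl hγb)
        intro o' ho'
        exact lt_of_le_of_lt (Ordinal.le_bsup (fun o' _ => Ordinal.enumOrd s o') o' ho') hγ1
      exact lt_of_le_of_lt hle hγ2
  refine ⟨Ordinal.enumOrd s '' Set.Iio μ.ord, ?_, ?_⟩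
  · rintro ξ ⟨o, ho, rfl⟩
    have h1 : Ordinal.enumOrd s o < ν.ord := key o (lt_of_lt_of_le ho (Cardinal.ord_le_ord.2 hμ))
    rcases Ordinal.enumOrd_mem hs o with h | h
    · exact h
    · exact absurd (Set.mem_Ici.1 h) (not_le.2 h1)
  · rw [Cardinal.mk_image_eq_of_injOn _ _ ((Ordinal.enumOrd_strictMono hs).injective.injOn),
      Ordinal.mk_Iio_ordinal, Cardinal.card_ord]

lemma clubIn_Ioo {ν : Cardinal.{u}} (h : Order.IsSuccLimit ν.ord) {α : Ordinal.{u}} (hα : α < ν.ord) :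
    ClubIn (Set.Ioo α ν.ord) ν.ord := by
  refine ⟨fun ξ hξ => hξ.2, ?_, ?_⟩
  · intro β hβ hβ0 hunb
    obtain ⟨γ, hγ1, _, hγ3⟩ := hunb 0 hβ0
    exact ⟨lt_of_lt_of_le hγ1.1 hγ3.le, hβ⟩
  · intro β hβ
    have hm : max α β + 1 < ν.ord := by
      rw [Ordinal.add_one_eq_succ]
      exact h.succ_lt (max_lt hα hβ)
    refine ⟨max α β + 1, ⟨?_, hm⟩, ?_, hm⟩
    · exact lt_of_le_of_lt (le_max_left _ _)
        (by rw [Ordinal.add_one_eq_succ]; exact Order.lt_succ _)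
    · exact lt_of_le_of_lt (le_max_right _ _)
        (by rw [Ordinal.add_one_eq_succ]; exact Order.lt_succ _)

lemma exists_surj_family {T : Set (Set Ordinal.{u})} (hT : T.Nonempty) {κ : Cardinal.{v}}
    (hle : Nonempty (↥T ↪ ↥(Set.Iio κ.ord : Set Ordinal.{v}))) :
    ∃ F : Ordinal.{v} → Set Ordinal.{u}, (∀ i, F i ∈ T) ∧ ∀ x ∈ T, ∃ i < κ.ord, F i = x := by
  classical
  obtain ⟨e⟩ := hle
  obtain ⟨x0, hx0⟩ := hT
  refine ⟨fun i => if h : ∃ t : T, ((e t : Set.Iio κ.ord) : Ordinal.{v}) = i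
    then (h.choose : Set Ordinal.{u}) else x0, ?_, ?_⟩
  · intro i
    dsimp only
    by_cases h : ∃ t : T, ((e t : Set.Iio κ.ord) : Ordinal.{v}) = i
    · rw [dif_pos h]; exact h.choose.2
    · rw [dif_neg h]; exact hx0
  · intro x hx
    refine ⟨(e ⟨x, hx⟩ : Set.Iio κ.ord), (e ⟨x, hx⟩).2, ?_⟩
    have h : ∃ t : T, ((e t : Set.Iio κ.ord) : Ordinal.{v}) =
        ((e ⟨x, hx⟩ : Set.Iio κ.ord) : Ordinal.{v}) := ⟨⟨x, hx⟩, rfl⟩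
    dsimp only
    rw [dif_pos h]
    have h2 := h.choose_spec
    have h3 : h.choose = (⟨x, hx⟩ : T) := e.injective (Subtype.ext h2)
    rw [h3]

lemma Tset_inj (ν μ : Cardinal.{u}) :
    Function.Injective (fun (x : {x : Set Ordinal.{u} | x ⊆ Set.Iio ν.ord ∧ (otp x).card = μ}) =>
      (Subtype.val ⁻¹' (x : Set Ordinal.{u}) : Set (Set.Iio ν.ord))) := by
  intro x y hxy
  dsimp only at hxy
  apply Subtype.ext
  have hx : Subtype.val '' (Subtype.val ⁻¹' (x : Set Ordinal.{u}) : Set (Set.Iio ν.ord)) = x :=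
    Set.image_preimage_eq_of_subset (by rw [Subtype.range_coe]; exact x.2.1)
  have hy : Subtype.val '' (Subtype.val ⁻¹' (y : Set Ordinal.{u}) : Set (Set.Iio ν.ord)) = y :=
    Set.image_preimage_eq_of_subset (by rw [Subtype.range_coe]; exact y.2.1)
  rw [← hx, ← hy, hxy]

lemma mk_Tset_le (ν μ : Cardinal.{u}) :
    #{x : Set Ordinal.{u} | x ⊆ Set.Iio ν.ord ∧ (otp x).card = μ} ≤
      Cardinal.lift.{u+1, u} (2 ^ ν) := by
  have h1 := Cardinal.mk_le_of_injective (Tset_inj ν μ)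
  refine h1.trans ?_
  rw [Cardinal.mk_set, Ordinal.mk_Iio_ordinal, Cardinal.card_ord, Cardinal.lift_power,
    Cardinal.lift_two]

lemma Tset_mem_Iio {ν μ : Cardinal.{u}} (hμ : μ ≤ ν) :
    (Set.Iio μ.ord) ∈ {x : Set Ordinal.{u} | x ⊆ Set.Iio ν.ord ∧ (otp x).card = μ} :=
  ⟨fun _ h => lt_of_lt_of_le h (Cardinal.ord_le_ord.2 hμ), otp_Iio μ⟩

lemma CC_family {ν μ : Cardinal.{u}} (hν : ν.IsRegular) (hμν : μ ≤ ν) (hCC : CC ν μ ≤ ν) :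
    ∃ F : Ordinal.{u} → Set Ordinal.{u},
      (∀ i, F i ⊆ Set.Iio ν.ord ∧ (otp (F i)).card = μ) ∧
      ∀ b, ClubIn b ν.ord → ∃ i < ν.ord, F i ⊆ b := by
  classical
  have hemb : Nonempty (↥{x : Set Ordinal.{u} | x ⊆ Set.Iio ν.ord ∧ (otp x).card = μ} ↪
      ↥(Set.Iio (2 ^ ν : Cardinal.{u}).ord : Set Ordinal.{u})) := by
    apply (Cardinal.le_def _ _).mp
    rw [Ordinal.mk_Iio_ordinal, Cardinal.card_ord]
    exact mk_Tset_le ν μ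
  obtain ⟨G, hG1, hG2⟩ := exists_surj_family ⟨_, Tset_mem_Iio hμν⟩ hemb
  have hmem : (2 ^ ν) ∈ { c : Cardinal.{u} | ∃ 𝒞 : Ordinal.{u} → Set Ordinal.{u},
      (∀ i < c.ord, 𝒞 i ⊆ Set.Iio ν.ord ∧ (otp (𝒞 i)).card = μ) ∧
      ∀ b, ClubIn b ν.ord → ∃ i < c.ord, 𝒞 i ⊆ b } := by
    refine ⟨G, fun i _ => ⟨(hG1 i).1, (hG1 i).2⟩, fun b hb => ?_⟩
    obtain ⟨x, hxb, hxc⟩ := club_subset hν hb.2.2 hμν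
    have hxIio : x ⊆ Set.Iio ν.ord := hxb.trans hb.1
    obtain ⟨i, hi, hGi⟩ := hG2 x ⟨hxIio, otp_card_eq hxIio hxc⟩
    exact ⟨i, hi, hGi ▸ hxb⟩
  have hne : { c : Cardinal.{u} | ∃ 𝒞 : Ordinal.{u} → Set Ordinal.{u},
      (∀ i < c.ord, 𝒞 i ⊆ Set.Iio ν.ord ∧ (otp (𝒞 i)).card = μ) ∧
      ∀ b, ClubIn b ν.ord → ∃ i < c.ord, 𝒞 i ⊆ b }.Nonempty := ⟨_, hmem⟩
  obtain ⟨F, hF1, hF2⟩ := csInf_mem hne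
  refine ⟨fun i => if h : i < (CC ν μ).ord then F i else Set.Iio μ.ord, ?_, ?_⟩
  · intro i
    dsimp only
    by_cases h : i < (CC ν μ).ord
    · rw [dif_pos h]; exact hF1 i h
    · rw [dif_neg h]; exact Tset_mem_Iio hμν
  · intro b hb
    obtain ⟨i, hi, hFi⟩ := hF2 b hb
    refine ⟨i, lt_of_lt_of_le hi (Cardinal.ord_le_ord.2 hCC), ?_⟩
    dsimp only
    split
    · exact hFi
    · next h => exact absurd hi h

lemma DD_family' {ν μ : Cardinal.{u}} (hμν : μ ≤ ν)
    (hne : { c : Cardinal.{v} | ∃ 𝒟 : Ordinal.{v} → Set Ordinal.{u},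
      (∀ i < c.ord, 𝒟 i ⊆ Set.Iio ν.ord ∧ (otp (𝒟 i)).card = μ) ∧
      ∀ a : Set Ordinal.{u}, a ⊆ Set.Iio ν.ord → (otp a).card = μ →
        ∃ i < c.ord, 𝒟 i ⊆ a }.Nonempty) :
    ∃ F : Ordinal.{v} → Set Ordinal.{u},
      (∀ i, F i ⊆ Set.Iio ν.ord ∧ (otp (F i)).card = μ) ∧
      ∀ a : Set Ordinal.{u}, a ⊆ Set.Iio ν.ord → (otp a).card = μ →
        ∃ i < (DD.{u,u,v} ν μ).ord, F i ⊆ a := by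
  classical
  obtain ⟨F, hF1, hF2⟩ := csInf_mem hne
  have hDDdef : DD.{u,u,v} ν μ = sInf { c : Cardinal.{v} | ∃ 𝒟 : Ordinal.{v} → Set Ordinal.{u},
      (∀ i < c.ord, 𝒟 i ⊆ Set.Iio ν.ord ∧ (otp (𝒟 i)).card = μ) ∧
      ∀ a : Set Ordinal.{u}, a ⊆ Set.Iio ν.ord → (otp a).card = μ →
        ∃ i < c.ord, 𝒟 i ⊆ a } := rfl
  refine ⟨fun i => if h : i < (DD.{u,u,v} ν μ).ord then F i else Set.Iio μ.ord, ?_, ?_⟩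
  · intro i
    dsimp only
    by_cases h : i < (DD.{u,u,v} ν μ).ord
    · rw [dif_pos h]
      rw [hDDdef] at h
      exact hF1 i h
    · rw [dif_neg h]; exact Tset_mem_Iio hμν
  · intro a ha1 ha2
    obtain ⟨i, hi, hFi⟩ := hF2 a ha1 ha2
    rw [← hDDdef] at hi
    refine ⟨i, hi, ?_⟩
    dsimp only
    split
    · exact hFi
    · next h => exact absurd hi h

lemma CC_witness_big {ν θ : Cardinal.{u}} (hν : ν.IsRegular) (hθ0 : θ ≠ 0) (hθν : θ < ν)
    {c₀ : Cardinal.{v}} {F : Ordinal.{v} → Set Ordinal.{u}}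
    (h1 : ∀ i < c₀.ord, F i ⊆ Set.Iio ν.ord ∧ (otp (F i)).card = θ)
    (h2 : ∀ b, ClubIn b ν.ord → ∃ i < c₀.ord, F i ⊆ b) :
    Nonempty (↥(Set.Iio ν.ord : Set Ordinal.{u}) ↪ ↥(Set.Iio c₀.ord : Set Ordinal.{v})) := by
  classical
  have hνlim : Order.IsSuccLimit ν.ord := Cardinal.isSuccLimit_ord hν.1
  have hbdd : ∀ i, i < c₀.ord → ∃ β, β < ν.ord ∧ ∀ ξ ∈ F i, ξ ≤ β := by
    intro i hi
    by_contra hcon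
    push_neg at hcon
    have hunb : UnbIn (F i) ν.ord := by
      intro β hβ
      obtain ⟨ξ, hξ1, hξ2⟩ := hcon β hβ
      exact ⟨ξ, hξ1, hξ2, (h1 i hi).1 hξ1⟩
    obtain ⟨y, hy1, hy2⟩ := club_subset hν hunb (le_refl ν)
    have h3 : Cardinal.lift.{u+1,u} ν ≤ #(F i) := hy2 ▸ Cardinal.mk_le_mk_of_subset hy1
    rw [mk_of_otp (h1 i hi).1 (h1 i hi).2] at h3
    exact absurd (Cardinal.lift_le.1 h3) (not_le.2 hθν)
  set g : Ordinal.{v} → Ordinal.{u} := fun i =>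
    if h : i < c₀.ord ∧ ∃ β, β < ν.ord ∧ ∀ ξ ∈ F i, ξ ≤ β then h.2.choose + 1 else 0 with hg_def
  have hglt : ∀ i, g i < ν.ord := by
    intro i
    rw [hg_def]
    dsimp only
    by_cases h : i < c₀.ord ∧ ∃ β, β < ν.ord ∧ ∀ ξ ∈ F i, ξ ≤ β
    · rw [dif_pos h, Ordinal.add_one_eq_succ]
      exact hνlim.succ_lt h.2.choose_spec.1
    · rw [dif_neg h]
      exact hνlim.pos
  set B := g '' Set.Iio c₀.ord with hB_def
  have hBunb : UnbIn B ν.ord := by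
    intro β hβ
    obtain ⟨i, hi, hFi⟩ := h2 _ (clubIn_Ioo hνlim hβ)
    have hFne : (F i).Nonempty := by
      rw [← Set.nonempty_coe_sort, ← Cardinal.mk_ne_zero_iff,
        mk_of_otp (h1 i hi).1 (h1 i hi).2]
      simpa using hθ0
    obtain ⟨ξ0, hξ0⟩ := hFne
    have hcond : i < c₀.ord ∧ ∃ β', β' < ν.ord ∧ ∀ ξ ∈ F i, ξ ≤ β' := ⟨hi, hbdd i hi⟩
    refine ⟨g i, ⟨i, hi, rfl⟩, ?_, hglt i⟩
    have hβξ : β < ξ0 := (hFi hξ0).1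
    have hξc : ξ0 ≤ hcond.2.choose := hcond.2.choose_spec.2 ξ0 hξ0
    have : g i = hcond.2.choose + 1 := by rw [hg_def]; exact dif_pos hcond
    rw [this]
    exact lt_of_lt_of_le hβξ (le_trans hξc le_self_add)
  obtain ⟨y, hy1, hy2⟩ := club_subset hν hBunb (le_refl ν)
  have e1 : Nonempty (↥(Set.Iio ν.ord : Set Ordinal.{u}) ↪ ↥y) := by
    apply (Cardinal.le_def _ _).mp
    rw [Ordinal.mk_Iio_ordinal, Cardinal.card_ord, hy2]
  have hyB : ∀ ξ : y, ∃ i, i < c₀.ord ∧ g i = ξ := by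
    intro ξ
    obtain ⟨i, hi, hgi⟩ := hy1 ξ.2
    exact ⟨i, hi, hgi⟩
  choose φ hφ1 hφ2 using hyB
  have e2 : ↥y ↪ ↥(Set.Iio c₀.ord : Set Ordinal.{v}) := by
    refine ⟨fun ξ => ⟨φ ξ, hφ1 ξ⟩, ?_⟩
    intro ξ ξ' h
    have hφeq : φ ξ = φ ξ' := congrArg Subtype.val h
    apply Subtype.ext
    rw [← hφ2 ξ, ← hφ2 ξ', hφeq]
  exact ⟨e1.some.trans e2⟩

lemma SDD_nonempty {ν σ : Cardinal.{u}} (hσν : σ ≤ ν) {c₀ : Cardinal.{v}}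
    (hemb : Nonempty (↥(Set.Iio ν.ord : Set Ordinal.{u}) ↪ ↥(Set.Iio c₀.ord : Set Ordinal.{v}))) :
    { c : Cardinal.{v} | ∃ 𝒟 : Ordinal.{v} → Set Ordinal.{u},
      (∀ i < c.ord, 𝒟 i ⊆ Set.Iio ν.ord ∧ (otp (𝒟 i)).card = σ) ∧
      ∀ a : Set Ordinal.{u}, a ⊆ Set.Iio ν.ord → (otp a).card = σ →
        ∃ i < c.ord, 𝒟 i ⊆ a }.Nonempty := by
  classical
  have hc : #(Set (↥(Set.Iio c₀.ord : Set Ordinal.{v}))) =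
      #(↥(Set.Iio ((2 ^ c₀ : Cardinal.{v})).ord : Set Ordinal.{v})) := by
    rw [Cardinal.mk_set, Ordinal.mk_Iio_ordinal, Cardinal.card_ord, Ordinal.mk_Iio_ordinal,
      Cardinal.card_ord, Cardinal.lift_power, Cardinal.lift_two]
  obtain ⟨E3⟩ := Cardinal.eq.1 hc
  have hembT : Nonempty (↥{x : Set Ordinal.{u} | x ⊆ Set.Iio ν.ord ∧ (otp x).card = σ} ↪
      ↥(Set.Iio ((2 ^ c₀ : Cardinal.{v})).ord : Set Ordinal.{v})) :=
    ⟨((⟨_, Tset_inj ν σ⟩ : _ ↪ Set (↥(Set.Iio ν.ord : Set Ordinal.{u}))).trans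
        (hemb.some.image)).trans E3.toEmbedding⟩
  obtain ⟨F, hF1, hF2⟩ := exists_surj_family ⟨_, Tset_mem_Iio hσν⟩ hembT
  refine ⟨2 ^ c₀, F, fun i _ => hF1 i, fun a ha1 ha2 => ?_⟩
  obtain ⟨i, hi, hFi⟩ := hF2 a ⟨ha1, ha2⟩
  exact ⟨i, hi, hFi ▸ subset_rfl⟩

lemma cof_ord_finite {θ : Cardinal.{u}} (h1 : θ.ord.cof < θ) (h2 : θ < Cardinal.aleph0) :
    θ.ord.cof = 1 := by
  have hθ0 : θ ≠ 0 := by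
    rintro rfl
    rw [Cardinal.ord_zero, Ordinal.cof_zero] at h1
    exact absurd h1 (lt_irrefl 0)
  have hord0 : θ.ord ≠ 0 := by
    intro h
    apply hθ0
    rw [← Cardinal.card_ord θ, h, Ordinal.card_zero]
  have hlt : θ.ord < Ordinal.omega0 := by
    rw [← Cardinal.ord_aleph0]
    exact Cardinal.ord_lt_ord.2 h2
  obtain ⟨n, hn⟩ := Ordinal.lt_omega0.1 hlt
  obtain ⟨m, rfl⟩ : ∃ m : ℕ, n = m + 1 := by
    cases n with
    | zero => exact absurd hn (by simpa using hord0)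
    | succ m => exact ⟨m, rfl⟩
  rw [hn]
  have h3 : ((m + 1 : ℕ) : Ordinal.{u}) = Order.succ (m : Ordinal.{u}) := by
    rw [Nat.cast_add, Nat.cast_one, Ordinal.add_one_eq_succ]
  rw [h3, Ordinal.cof_succ]

lemma mk_Tfin_le {ν θ : Cardinal.{u}} (hν : Cardinal.aleph0 ≤ ν) (hθ : θ < Cardinal.aleph0) :
    #{x : Set Ordinal.{u} | x ⊆ Set.Iio ν.ord ∧ (otp x).card = θ} ≤ #(Set.Iio ν.ord) := by
  classical
  have hinf : Infinite (Set.Iio ν.ord) := by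
    rw [Cardinal.infinite_iff, Ordinal.mk_Iio_ordinal, Cardinal.card_ord,
      Cardinal.aleph0_le_lift]
    exact hν
  have hfin : ∀ x : {x : Set Ordinal.{u} | x ⊆ Set.Iio ν.ord ∧ (otp x).card = θ},
      (Subtype.val ⁻¹' (x : Set Ordinal.{u}) : Set (Set.Iio ν.ord)).Finite := by
    intro x
    have h1 : #(x : Set Ordinal.{u}) = Cardinal.lift.{u+1, u} θ := mk_of_otp x.2.1 x.2.2
    have h2 : ((x : Set Ordinal.{u})).Finite := by
      rw [← Cardinal.lt_aleph0_iff_set_finite, h1, Cardinal.lift_lt_aleph0]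
      exact hθ
    exact h2.preimage (Subtype.val_injective.injOn)
  have h1 : #{x : Set Ordinal.{u} | x ⊆ Set.Iio ν.ord ∧ (otp x).card = θ} ≤
      #(Finset (Set.Iio ν.ord)) := by
    apply Cardinal.mk_le_of_injective (f := fun x => (hfin x).toFinset)
    intro x y hxy
    dsimp only at hxy
    apply Subtype.ext
    have hxy2 : (Subtype.val ⁻¹' (x : Set Ordinal.{u}) : Set (Set.Iio ν.ord)) =
        (Subtype.val ⁻¹' (y : Set Ordinal.{u}) : Set (Set.Iio ν.ord)) := by
      rw [← Set.Finite.coe_toFinset (hfin x), ← Set.Finite.coe_toFinset (hfin y), hxy]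
    have hx : Subtype.val '' (Subtype.val ⁻¹' (x : Set Ordinal.{u}) : Set (Set.Iio ν.ord)) = x :=
      Set.image_preimage_eq_of_subset (by rw [Subtype.range_coe]; exact x.2.1)
    have hy : Subtype.val '' (Subtype.val ⁻¹' (y : Set Ordinal.{u}) : Set (Set.Iio ν.ord)) = y :=
      Set.image_preimage_eq_of_subset (by rw [Subtype.range_coe]; exact y.2.1)
    rw [← hx, ← hy, hxy2]
  rw [Cardinal.mk_finset_of_infinite] at h1
  exact h1

lemma main_finite {ν θ : Cardinal.{u}} (hν : ν.IsRegular) (hθν : θ ≤ ν)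
    (hθ : θ < Cardinal.aleph0) (hσ : θ.ord.cof = 1)
    {D : Ordinal.{v} → Set Ordinal.{u}} {Dbound : Cardinal.{v}}
    (hD1 : ∀ i, D i ⊆ Set.Iio ν.ord ∧ (otp (D i)).card = θ.ord.cof)
    (hD2 : ∀ a : Set Ordinal.{u}, a ⊆ Set.Iio ν.ord → (otp a).card = θ.ord.cof →
      ∃ i < Dbound.ord, D i ⊆ a) :
    ∃ 𝒞 : Ordinal.{v} → Set Ordinal.{u},
      (∀ k < Dbound.ord, 𝒞 k ⊆ Set.Iio ν.ord ∧ (otp (𝒞 k)).card = θ) ∧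
      ∀ b, ClubIn b ν.ord → ∃ k < Dbound.ord, 𝒞 k ⊆ b := by
  classical
  rw [hσ] at hD1 hD2
  set T := {x : Set Ordinal.{u} | x ⊆ Set.Iio ν.ord ∧ (otp x).card = θ} with hT_def
  obtain ⟨E⟩ := (Cardinal.le_def _ _).mp (mk_Tfin_le hν.1 hθ)
  refine ⟨fun k => if h : ∃ x : T, ((E x : Set.Iio ν.ord) : Ordinal.{u}) ∈ D k
    then (h.choose : Set Ordinal.{u}) else Set.Iio θ.ord, ?_, ?_⟩
  · intro k _
    dsimp only
    by_cases h : ∃ x : T, ((E x : Set.Iio ν.ord) : Ordinal.{u}) ∈ D k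
    · rw [dif_pos h]; exact h.choose.2
    · rw [dif_neg h]
      exact ⟨fun _ hx => lt_of_lt_of_le hx (Cardinal.ord_le_ord.2 hθν), otp_Iio θ⟩
  · intro b hb
    obtain ⟨x, hxb, hxc⟩ := club_subset hν hb.2.2 hθν
    have hxT : x ∈ T := ⟨hxb.trans hb.1, otp_card_eq (hxb.trans hb.1) hxc⟩
    set β := E ⟨x, hxT⟩ with hβ_def
    have ha1 : ({(β : Ordinal.{u})} : Set Ordinal.{u}) ⊆ Set.Iio ν.ord := by
      rw [Set.singleton_subset_iff]; exact β.2
    have ha2 : (otp ({(β : Ordinal.{u})} : Set Ordinal.{u})).card = 1 :=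
      otp_card_eq ha1 (by rw [Cardinal.mk_singleton, Cardinal.lift_one])
    obtain ⟨k, hk, hDk⟩ := hD2 _ ha1 ha2
    have hne : (D k).Nonempty := by
      rw [← Set.nonempty_coe_sort, ← Cardinal.mk_ne_zero_iff]
      rw [mk_of_otp (hD1 k).1 (hD1 k).2, Cardinal.lift_one]
      exact one_ne_zero
    have hDkeq : D k = {(β : Ordinal.{u})} := (hne.subset_singleton_iff).1 hDk
    have h : ∃ x' : T, ((E x' : Set.Iio ν.ord) : Ordinal.{u}) ∈ D k :=
      ⟨⟨x, hxT⟩, by rw [hDkeq]; exact Set.mem_singleton _⟩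
    refine ⟨k, hk, ?_⟩
    dsimp only
    split
    · next hpos =>
      have h2 : ((E hpos.choose : Set.Iio ν.ord) : Ordinal.{u}) = (β : Ordinal.{u}) :=
        Set.eq_of_mem_singleton (hDk hpos.choose_spec)
      have h3 : hpos.choose = (⟨x, hxT⟩ : T) := E.injective (Subtype.ext h2)
      rw [h3]
      exact hxb
    · next hneg => exact absurd h hneg


lemma main_infinite {ν θ : Cardinal.{u}} (hν : ν.IsRegular) (hθν : θ ≤ ν)
    (hsing : θ.ord.cof < θ) (hθ : Cardinal.aleph0 ≤ θ)
    (hreg : ∀ μ : Cardinal.{u}, μ.IsRegular → μ < θ → CC ν μ ≤ ν)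
    {D : Ordinal.{v} → Set Ordinal.{u}} {Dbound : Cardinal.{v}}
    (hD1 : ∀ i, D i ⊆ Set.Iio ν.ord ∧ (otp (D i)).card = θ.ord.cof)
    (hD2 : ∀ a : Set Ordinal.{u}, a ⊆ Set.Iio ν.ord → (otp a).card = θ.ord.cof →
      ∃ i < Dbound.ord, D i ⊆ a) :
    ∃ 𝒞 : Ordinal.{v} → Set Ordinal.{u},
      (∀ k < Dbound.ord, 𝒞 k ⊆ Set.Iio ν.ord ∧ (otp (𝒞 k)).card = θ) ∧
      ∀ b, ClubIn b ν.ord → ∃ k < Dbound.ord, 𝒞 k ⊆ b := by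
  classical
  have hσreg : (θ.ord.cof).IsRegular := Cardinal.isRegular_cof (Cardinal.isSuccLimit_ord hθ)
  have hσinf : Cardinal.aleph0 ≤ θ.ord.cof := hσreg.1
  have hσθ : θ.ord.cof < θ := hsing
  have hσν : θ.ord.cof ≤ ν := le_of_lt (lt_of_lt_of_le hσθ hθν)
  have hℵθ : Cardinal.aleph0 < θ := by
    rcases lt_or_eq_of_le hθ with h | h
    · exact h
    · exfalso
      rw [← h] at hsing
      rw [Cardinal.isRegular_aleph0.cof_eq] at hsing
      exact lt_irrefl _ hsing
  have hlimit : ∀ c : Cardinal.{u}, c < θ → Order.succ c < θ := by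
    intro c hc
    rcases lt_or_ge c Cardinal.aleph0 with h | h
    · exact lt_of_le_of_lt (Order.succ_le_of_lt h) hℵθ
    · have hreg' : (Order.succ c).IsRegular := Cardinal.isRegular_succ h
      have hle : Order.succ c ≤ θ := Order.succ_le_of_lt hc
      rcases lt_or_eq_of_le hle with h2 | h2
      · exact h2
      · exfalso
        rw [h2] at hreg'
        rw [hreg'.cof_eq] at hsing
        exact lt_irrefl _ hsing
  have hσlim : Order.IsSuccLimit (θ.ord.cof).ord := Cardinal.isSuccLimit_ord hσinf
  obtain ⟨f, hf⟩ := Ordinal.exists_blsub_cof θ.ord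
  set g : Ordinal.{u} → Ordinal.{u} := fun j => if hj : j < (θ.ord.cof).ord then
      Ordinal.bsup.{u,u} (j+1) (fun k hk => f k
        (lt_of_le_of_lt (Order.lt_succ_iff.1 (by rwa [Ordinal.add_one_eq_succ] at hk)) hj))
    else 0 with hg_def
  have hglt : ∀ j, j < (θ.ord.cof).ord → g j < θ.ord := by
    intro j hj
    rw [hg_def]
    dsimp only
    rw [dif_pos hj]
    apply Ordinal.bsup_lt_ord
    · have hj1 : j + 1 < (θ.ord.cof).ord := by
        rw [Ordinal.add_one_eq_succ]
        exact hσlim.succ_lt hj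
      exact Cardinal.lt_ord.1 hj1
    · intro k hk
      have hkσ : k < (θ.ord.cof).ord :=
        lt_of_le_of_lt (Order.lt_succ_iff.1 (by rwa [Ordinal.add_one_eq_succ] at hk)) hj
      have hlt := Ordinal.lt_blsub f k hkσ
      rwa [hf] at hlt
  have hgmono : ∀ j1 j2, j1 ≤ j2 → j2 < (θ.ord.cof).ord → g j1 ≤ g j2 := by
    intro j1 j2 h12 hj2
    have hj1 : j1 < (θ.ord.cof).ord := lt_of_le_of_lt h12 hj2
    rw [hg_def]
    dsimp only
    rw [dif_pos hj1, dif_pos hj2]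
    rw [Ordinal.bsup_le_iff]
    intro k hk
    exact Ordinal.le_bsup _ k (lt_of_lt_of_le hk (add_le_add_left h12 1))
  have hgcof : ∀ c, c < θ.ord → ∃ j, j < (θ.ord.cof).ord ∧ c ≤ g j := by
    intro c hc
    rw [← hf] at hc
    obtain ⟨i, hi, hci⟩ := (Ordinal.lt_blsub_iff).1 hc
    refine ⟨i, hi, ?_⟩
    rw [hg_def]
    dsimp only
    rw [dif_pos hi]
    refine le_trans hci (Ordinal.le_bsup _ i ?_)
    rw [Ordinal.add_one_eq_succ]
    exact Order.lt_succ i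
  set θs : Ordinal.{u} → Cardinal.{u} :=
    fun j => Order.succ (max (g j).card Cardinal.aleph0) with hθs_def
  have hθs_reg : ∀ j, (θs j).IsRegular := fun j => Cardinal.isRegular_succ (le_max_right _ _)
  have hθs_lt : ∀ j, j < (θ.ord.cof).ord → θs j < θ := by
    intro j hj
    apply hlimit
    exact max_lt (Cardinal.lt_ord.1 (hglt j hj)) hℵθ
  have hθs_cof : ∀ c : Cardinal.{u}, c < θ →
      ∃ j0, j0 < (θ.ord.cof).ord ∧ ∀ j, j0 ≤ j → j < (θ.ord.cof).ord → c ≤ θs j := by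
    intro c hc
    obtain ⟨j0, hj0, hcj0⟩ := hgcof c.ord (Cardinal.ord_lt_ord.2 hc)
    refine ⟨j0, hj0, fun j h0j hj => ?_⟩
    have h1 : c.ord ≤ g j := le_trans hcj0 (hgmono j0 j h0j hj)
    have h2 : c ≤ (g j).card := Cardinal.ord_le.1 h1
    exact le_trans (le_trans h2 (le_max_left _ _)) (Order.le_succ _)
  have hFex : ∀ j : Ordinal.{u}, ∃ F : Ordinal.{u} → Set Ordinal.{u},
      j < (θ.ord.cof).ord → ((∀ i, F i ⊆ Set.Iio ν.ord ∧ (otp (F i)).card = θs j) ∧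
        ∀ b, ClubIn b ν.ord → ∃ i < ν.ord, F i ⊆ b) := by
    intro j
    by_cases hj : j < (θ.ord.cof).ord
    · obtain ⟨F, hF⟩ := CC_family hν (le_of_lt (lt_of_lt_of_le (hθs_lt j hj) hθν))
        (hreg _ (hθs_reg j) (hθs_lt j hj))
      exact ⟨F, fun _ => hF⟩
    · exact ⟨fun _ => ∅, fun h => absurd h hj⟩
  choose F hF using hFex
  have hembc : #((Set.Iio (θ.ord.cof).ord : Set Ordinal.{u}) ×
      (Set.Iio ν.ord : Set Ordinal.{u})) ≤ #(Set.Iio ν.ord : Set Ordinal.{u}) := by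
    rw [Cardinal.mk_prod, Cardinal.lift_id, Cardinal.lift_id, Ordinal.mk_Iio_ordinal,
      Ordinal.mk_Iio_ordinal, Cardinal.card_ord, Cardinal.card_ord]
    calc Cardinal.lift.{u+1,u} θ.ord.cof * Cardinal.lift.{u+1,u} ν
        ≤ Cardinal.lift.{u+1,u} ν * Cardinal.lift.{u+1,u} ν :=
          mul_le_mul' (Cardinal.lift_le.2 hσν) le_rfl
      _ = Cardinal.lift.{u+1,u} ν := Cardinal.mul_eq_self (Cardinal.aleph0_le_lift.2 hν.1)
  obtain ⟨E⟩ := (Cardinal.le_def _ _).mp hembc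
  set e : Ordinal.{u} → Ordinal.{u} → Ordinal.{u} := fun j i =>
    if h : j < (θ.ord.cof).ord ∧ i < ν.ord then (E (⟨j, h.1⟩, ⟨i, h.2⟩) : Ordinal.{u})
    else 0 with he_def
  have he_lt : ∀ {j i}, j < (θ.ord.cof).ord → i < ν.ord → e j i < ν.ord := by
    intro j i hj hi
    rw [he_def]
    dsimp only
    rw [dif_pos ⟨hj, hi⟩]
    exact (E (⟨j, hj⟩, ⟨i, hi⟩)).2
  have he_inj : ∀ {j i j' i'}, j < (θ.ord.cof).ord → i < ν.ord → j' < (θ.ord.cof).ord →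
      i' < ν.ord → e j i = e j' i' → j = j' ∧ i = i' := by
    intro j i j' i' hj hi hj' hi' heq
    rw [he_def] at heq
    dsimp only at heq
    rw [dif_pos ⟨hj, hi⟩, dif_pos ⟨hj', hi'⟩] at heq
    have h2 := E.injective (Subtype.ext heq)
    have h3 := congrArg Prod.fst h2
    have h4 := congrArg Prod.snd h2
    exact ⟨congrArg Subtype.val h3, congrArg Subtype.val h4⟩
  set dec : Ordinal.{u} → Set Ordinal.{u} := fun ξ =>
    if h : ∃ p : Ordinal.{u} × Ordinal.{u}, p.1 < (θ.ord.cof).ord ∧ p.2 < ν.ord ∧ e p.1 p.2 = ξ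
    then F h.choose.1 h.choose.2 else ∅ with hdec_def
  have hdec : ∀ {j i}, j < (θ.ord.cof).ord → i < ν.ord → dec (e j i) = F j i := by
    intro j i hj hi
    have h : ∃ p : Ordinal.{u} × Ordinal.{u},
        p.1 < (θ.ord.cof).ord ∧ p.2 < ν.ord ∧ e p.1 p.2 = e j i := ⟨(j, i), hj, hi, rfl⟩
    rw [hdec_def]
    dsimp only
    rw [dif_pos h]
    obtain ⟨hp1, hp2, hp3⟩ := h.choose_spec
    obtain ⟨hj', hi'⟩ := he_inj hp1 hp2 hj hi hp3
    rw [hj', hi']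
  refine ⟨fun k => if h : (⋃ ξ ∈ D k, dec ξ) ⊆ Set.Iio ν.ord ∧
      (otp (⋃ ξ ∈ D k, dec ξ)).card = θ
    then (⋃ ξ ∈ D k, dec ξ) else Set.Iio θ.ord, ?_, ?_⟩
  · intro k _
    dsimp only
    split
    · next h => exact h
    · next h => exact ⟨fun _ hx => lt_of_lt_of_le hx (Cardinal.ord_le_ord.2 hθν), otp_Iio θ⟩
  · intro b hb
    have hι0 : ∀ j : Ordinal.{u}, ∃ i, j < (θ.ord.cof).ord → (i < ν.ord ∧ F j i ⊆ b) := by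
      intro j
      by_cases hj : j < (θ.ord.cof).ord
      · obtain ⟨i, hi, hFi⟩ := (hF j hj).2 b hb
        exact ⟨i, fun _ => ⟨hi, hFi⟩⟩
      · exact ⟨0, fun h => absurd h hj⟩
    choose ι hι using hι0
    set a : Set Ordinal.{u} := (fun j => e j (ι j)) '' Set.Iio (θ.ord.cof).ord with ha_def
    have haIio : a ⊆ Set.Iio ν.ord := by
      rintro _ ⟨j, hj, rfl⟩
      exact he_lt hj (hι j hj).1
    have hamk : #a = Cardinal.lift.{u+1,u} θ.ord.cof := by
      rw [ha_def, Cardinal.mk_image_eq_of_injOn _ _ ?_, Ordinal.mk_Iio_ordinal, Cardinal.card_ord]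
      intro j hj j' hj' heq
      exact (he_inj hj (hι j hj).1 hj' (hι j' hj').1 heq).1
    obtain ⟨k, hk, hdk⟩ := hD2 a haIio (otp_card_eq haIio hamk)
    have hdmk : #(D k) = Cardinal.lift.{u+1,u} θ.ord.cof := mk_of_otp (hD1 k).1 (hD1 k).2
    have hXb : (⋃ ξ ∈ D k, dec ξ) ⊆ b := by
      apply Set.iUnion₂_subset
      intro ξ hξ
      obtain ⟨j, hj, rfl⟩ := hdk hξ
      rw [hdec hj (hι j hj).1]
      exact (hι j hj).2
    have hXν : (⋃ ξ ∈ D k, dec ξ) ⊆ Set.Iio ν.ord := hXb.trans hb.1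
    have hXle : #(⋃ ξ ∈ D k, dec ξ) ≤ Cardinal.lift.{u+1,u} θ := by
      refine le_trans (Cardinal.mk_biUnion_le _ _) ?_
      have hsup : ⨆ ξ : D k, #(dec (ξ : Ordinal.{u})) ≤ Cardinal.lift.{u+1,u} θ := by
        apply ciSup_le'
        intro ξ
        obtain ⟨j, hj, hje⟩ := hdk ξ.2
        rw [← hje, hdec hj (hι j hj).1]
        rw [mk_of_otp ((hF j hj).1 (ι j)).1 ((hF j hj).1 (ι j)).2]
        exact Cardinal.lift_le.2 (le_of_lt (hθs_lt j hj))
      calc #(D k) * (⨆ ξ : D k, #(dec (ξ : Ordinal.{u})))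
          ≤ Cardinal.lift.{u+1,u} θ.ord.cof * Cardinal.lift.{u+1,u} θ :=
            mul_le_mul' (le_of_eq hdmk) hsup
        _ ≤ Cardinal.lift.{u+1,u} θ * Cardinal.lift.{u+1,u} θ :=
            mul_le_mul' (Cardinal.lift_le.2 (le_of_lt hσθ)) le_rfl
        _ = Cardinal.lift.{u+1,u} θ := Cardinal.mul_eq_self (Cardinal.aleph0_le_lift.2 hθ)
    have hJunb : ∀ β, β < (θ.ord.cof).ord → ∃ j, β ≤ j ∧ j < (θ.ord.cof).ord ∧
        e j (ι j) ∈ D k := by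
      intro β hβ
      by_contra hcon
      push_neg at hcon
      have hsub : D k ⊆ (fun j => e j (ι j)) '' Set.Iio β := by
        intro ξ hξ
        obtain ⟨j, hj, rfl⟩ := hdk hξ
        refine ⟨j, ?_, rfl⟩
        by_contra hjβ
        exact hcon j (not_lt.1 hjβ) hj hξ
      have h5 : #(D k) ≤ #((fun j => e j (ι j)) '' Set.Iio β) := Cardinal.mk_le_mk_of_subset hsub
      have h6 : #((fun j => e j (ι j)) '' Set.Iio β) ≤ #(Set.Iio β) := Cardinal.mk_image_le
      have h7 : Cardinal.lift.{u+1,u} θ.ord.cof ≤ Cardinal.lift.{u+1,u} β.card := by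
        rw [← hdmk, ← Ordinal.mk_Iio_ordinal]
        exact le_trans h5 h6
      exact absurd (Cardinal.lift_le.1 h7) (not_le.2 (Cardinal.lt_ord.1 hβ))
    have hXge : ∀ c : Cardinal.{u}, c < θ →
        Cardinal.lift.{u+1,u} c ≤ #(⋃ ξ ∈ D k, dec ξ) := by
      intro c hc
      obtain ⟨j0, hj0, hj0p⟩ := hθs_cof c hc
      obtain ⟨j, h0j, hjσ, hjd⟩ := hJunb j0 hj0
      have hsub : F j (ι j) ⊆ ⋃ ξ ∈ D k, dec ξ := by
        rw [← hdec hjσ (hι j hjσ).1]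
        exact Set.subset_biUnion_of_mem hjd
      have h8 : Cardinal.lift.{u+1,u} (θs j) ≤ #(⋃ ξ ∈ D k, dec ξ) := by
        rw [← mk_of_otp ((hF j hjσ).1 (ι j)).1 ((hF j hjσ).1 (ι j)).2]
        exact Cardinal.mk_le_mk_of_subset hsub
      exact le_trans (Cardinal.lift_le.2 (hj0p j h0j hjσ)) h8
    have hcard : (otp (⋃ ξ ∈ D k, dec ξ)).card = θ := by
      have hlift := otp_card hXν
      have hμθ : (otp (⋃ ξ ∈ D k, dec ξ)).card ≤ θ := by
        apply Cardinal.lift_le.1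
        rw [hlift]
        exact hXle
      rcases lt_or_eq_of_le hμθ with h9 | h9
      · exfalso
        have h10 := hXge (Order.succ ((otp (⋃ ξ ∈ D k, dec ξ)).card)) (hlimit _ h9)
        rw [← hlift] at h10
        have h11 := Cardinal.lift_le.1 h10
        exact absurd h11 (not_le.2 (Order.lt_succ _))
      · exact h9
    refine ⟨k, hk, ?_⟩
    dsimp only
    rw [dif_pos ⟨hXν, hcard⟩]
    exact hXb


lemma statement2_aux {ν θ : Cardinal.{u}} (hν : ν.IsRegular) (hνu : Cardinal.aleph0 < ν)
    (hθν : θ ≤ ν) (hsing : θ.ord.cof < θ)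
    (hreg : ∀ μ : Cardinal.{u}, μ.IsRegular → μ < θ → CC ν μ ≤ ν) :
    CC.{u,u,v} ν θ ≤ DD.{u,u,v} ν θ.ord.cof := by
  classical
  have hθ0 : θ ≠ 0 := by
    rintro rfl
    exact absurd hsing (not_lt.2 (Cardinal.zero_le _))
  have hθltν : θ < ν := by
    rcases lt_or_eq_of_le hθν with h | h
    · exact h
    · exfalso
      rw [h, hν.cof_eq] at hsing
      exact lt_irrefl _ hsing
  have hσν : θ.ord.cof ≤ ν := le_of_lt (lt_of_lt_of_le hsing hθν)
  by_cases hDD : { c : Cardinal.{v} | ∃ 𝒟 : Ordinal.{v} → Set Ordinal.{u},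
      (∀ i < c.ord, 𝒟 i ⊆ Set.Iio ν.ord ∧ (otp (𝒟 i)).card = θ.ord.cof) ∧
      ∀ a : Set Ordinal.{u}, a ⊆ Set.Iio ν.ord → (otp a).card = θ.ord.cof →
        ∃ i < c.ord, 𝒟 i ⊆ a }.Nonempty
  · obtain ⟨D, hD1, hD2⟩ := DD_family' hσν hDD
    by_cases hfin : θ < Cardinal.aleph0
    · obtain ⟨𝒞, h1, h2⟩ := main_finite hν hθν hfin (cof_ord_finite hsing hfin) hD1 hD2
      have hmem : DD.{u,u,v} ν θ.ord.cof ∈ { c : Cardinal.{v} |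
          ∃ 𝒞 : Ordinal.{v} → Set Ordinal.{u},
          (∀ i < c.ord, 𝒞 i ⊆ Set.Iio ν.ord ∧ (otp (𝒞 i)).card = θ) ∧
          ∀ b, ClubIn b ν.ord → ∃ i < c.ord, 𝒞 i ⊆ b } := ⟨𝒞, h1, h2⟩
      exact csInf_le' hmem
    · obtain ⟨𝒞, h1, h2⟩ := main_infinite hν hθν hsing (not_lt.1 hfin) hreg hD1 hD2
      have hmem : DD.{u,u,v} ν θ.ord.cof ∈ { c : Cardinal.{v} |
          ∃ 𝒞 : Ordinal.{v} → Set Ordinal.{u},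
          (∀ i < c.ord, 𝒞 i ⊆ Set.Iio ν.ord ∧ (otp (𝒞 i)).card = θ) ∧
          ∀ b, ClubIn b ν.ord → ∃ i < c.ord, 𝒞 i ⊆ b } := ⟨𝒞, h1, h2⟩
      exact csInf_le' hmem
  · have hempty : { c : Cardinal.{v} | ∃ 𝒞 : Ordinal.{v} → Set Ordinal.{u},
        (∀ i < c.ord, 𝒞 i ⊆ Set.Iio ν.ord ∧ (otp (𝒞 i)).card = θ) ∧
        ∀ b, ClubIn b ν.ord → ∃ i < c.ord, 𝒞 i ⊆ b } = ∅ := by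
      rw [Set.eq_empty_iff_forall_notMem]
      rintro c₀ ⟨Fc, hF1, hF2⟩
      exact hDD (SDD_nonempty hσν (CC_witness_big hν hθ0 hθltν hF1 hF2))
    have hCC0 : CC.{u,u,v} ν θ = 0 := by
      have hrfl : CC.{u,u,v} ν θ = sInf { c : Cardinal.{v} |
          ∃ 𝒞 : Ordinal.{v} → Set Ordinal.{u},
          (∀ i < c.ord, 𝒞 i ⊆ Set.Iio ν.ord ∧ (otp (𝒞 i)).card = θ) ∧
          ∀ b, ClubIn b ν.ord → ∃ i < c.ord, 𝒞 i ⊆ b } := rfl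
      rw [hrfl, hempty, Cardinal.sInf_empty]
    rw [hCC0]
    exact Cardinal.zero_le _



theorem statement2 (ν θ : Cardinal) (hν : ν.IsRegular) (hνu : Cardinal.aleph0 < ν)
    (hθν : θ ≤ ν) (hsing : θ.ord.cof < θ)
    (hreg : ∀ μ : Cardinal, μ.IsRegular → μ < θ → CC ν μ ≤ ν) :
    CC ν θ ≤ DD ν θ.ord.cof := by
  exact statement2_aux hν hνu hθν hsing hreg
end Helpers
end

section
/- For any ordinal ζ of uncountable cofinality, there exists a map ψ_ζ : Ord → cf(ζ) with the following property: for every ordinal α with cf(α) = cf(ζ), every function f : α → Ord, and every stationary s ⊆ α such that f restricted to s is strictly increasing and converging to ζ, there exists a club c ⊆ α such that (ψ_ζ ∘ f) restricted to c ∩ s is strictly increasing. -/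
open Cardinal Set Ordinal

theorem statement3 (ζ : Ordinal) (hζ : Cardinal.aleph0 < ζ.cof) :
    ∃ ψ : Ordinal → Ordinal, (∀ η, ψ η < ζ.cof.ord) ∧
      ∀ α : Ordinal, α.cof = ζ.cof →
        ∀ f : Ordinal → Ordinal, ∀ s ⊆ Set.Iio α, StatIn s α →
          StrictMonoOn f s → (∀ β ∈ s, f β < ζ) → (∀ γ < ζ, ∃ β ∈ s, γ < f β) →
          ∃ C, ClubIn C α ∧ StrictMonoOn (ψ ∘ f) (C ∩ s) := by
  set κo := ζ.cof.ord with hκodef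
  obtain ⟨g0, hg0⟩ := Ordinal.exists_fundamental_sequence ζ
  have hκpos : 0 < κo := by
    have : (0 : Cardinal) < ζ.cof := aleph0_pos.trans hζ
    simpa [hκodef] using (Cardinal.ord_lt_ord.2 this)
  set g : Ordinal → Ordinal := fun i => if h : i < κo then g0 i h else 0 with hgdef
  have hg_eq : ∀ i (h : i < κo), g i = g0 i h := by
    intro i h; simp [hgdef, h]
  have hg_lt : ∀ i, i < κo → g i < ζ := by
    intro i hi
    rw [hg_eq i hi, ← hg0.blsub_eq]
    exact Ordinal.lt_blsub _ _ _
  have hg_mono : ∀ i j, i ≤ j → j < κo → g i ≤ g j := by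
    intro i j hij hj
    have hi : i < κo := lt_of_le_of_lt hij hj
    rw [hg_eq i hi, hg_eq j hj]
    exact hg0.monotone hi hj hij
  have hexists : ∀ η, η < ζ → ∃ i, i < κo ∧ η ≤ g i := by
    intro η hη
    rw [← hg0.blsub_eq] at hη
    obtain ⟨i, hi, hle⟩ := Ordinal.lt_blsub_iff.1 hη
    exact ⟨i, hi, by rw [hg_eq i hi]; exact hle⟩
  set ψ : Ordinal → Ordinal := fun η => sInf {i | i < κo ∧ η ≤ g i} with hψdef
  have hψlt : ∀ η, ψ η < κo := by
    intro η
    rcases Set.eq_empty_or_nonempty {i | i < κo ∧ η ≤ g i} with he | hne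
    · simp only [hψdef, he, Ordinal.sInf_empty]
      exact hκpos
    · exact (csInf_mem hne).1
  have hψ_spec : ∀ η, η < ζ → η ≤ g (ψ η) := by
    intro η hη
    obtain ⟨i, hi, hle⟩ := hexists η hη
    have hne : Set.Nonempty {i | i < κo ∧ η ≤ g i} := ⟨i, hi, hle⟩
    exact (csInf_mem hne).2
  have hψ_min : ∀ η i, i < κo → η ≤ g i → ψ η ≤ i := by
    intro η i hi hle
    exact csInf_le (OrderBot.bddBelow _) ⟨hi, hle⟩
  refine ⟨ψ, hψlt, ?_⟩
  intro α hα f s hsub hstat hsm hflt hfcof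
  have hαlim : Order.IsSuccLimit α := Ordinal.aleph0_le_cof.1 (by rw [hα]; exact hζ.le)
  have hmonoψ : ∀ β ∈ s, ∀ β' ∈ s, β ≤ β' → ψ (f β) ≤ ψ (f β') := by
    intro β hβ β' hβ' hle
    have hf' : f β ≤ f β' := hsm.monotoneOn hβ hβ' hle
    exact hψ_min _ _ (hψlt _) (hf'.trans (hψ_spec _ (hflt β' hβ')))
  have hbnd : ∀ β, β ∈ s → ∃ δ, δ < α ∧ ∀ γ ∈ s, ψ (f γ) = ψ (f β) → γ < δ := by
    intro β hβ
    obtain ⟨β₁, hβ₁s, hβ₁⟩ := hfcof (g (ψ (f β))) (hg_lt _ (hψlt _))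
    refine ⟨β₁, hsub hβ₁s, fun γ hγ hγψ => ?_⟩
    by_contra h
    push_neg at h
    have h1 : f β₁ ≤ f γ := hsm.monotoneOn hβ₁s hγ h
    have h2 : f γ ≤ g (ψ (f γ)) := hψ_spec _ (hflt γ hγ)
    rw [hγψ] at h2
    exact absurd (h1.trans h2) (not_le.2 hβ₁)
  have hs_unb : ∀ δ, δ < α → ∃ β, β ∈ s ∧ δ < β := by
    intro δ hδ
    have hclub : ClubIn (Set.Ioo δ α) α := by
      refine ⟨fun x hx => hx.2, ?_, ?_⟩
      · intro x hx hx0 hunb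
        obtain ⟨γ, hγ, _, hγx⟩ := hunb 0 hx0
        exact ⟨hγ.1.trans hγx, hx⟩
      · intro y hy
        refine ⟨Order.succ (max δ y), ⟨?_, ?_⟩, ?_, ?_⟩
        · exact lt_of_le_of_lt (le_max_left δ y) (Order.lt_succ _)
        · exact hαlim.succ_lt (max_lt hδ hy)
        · exact lt_of_le_of_lt (le_max_right δ y) (Order.lt_succ _)
        · exact hαlim.succ_lt (max_lt hδ hy)
    obtain ⟨β, hβs, hβ⟩ := hstat _ hclub
    exact ⟨β, hβs, hβ.1⟩
  choose! bd hbd1 hbd2 using hbnd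
  choose! nx hnx1 hnx2 using hs_unb
  set C : Set Ordinal :=
    {δ | δ < α ∧ ∀ β ∈ s, β < δ → ∀ γ ∈ s, ψ (f γ) = ψ (f β) → γ < δ} with hCdef
  have hunb : UnbIn C α := by
    intro β₀ hβ₀
    let seq : ℕ → Ordinal := fun n =>
      Nat.rec (Order.succ β₀) (fun _ ih => max (bd (nx ih)) (Order.succ (nx ih))) n
    have hseq0 : seq 0 = Order.succ β₀ := rfl
    have hseqS : ∀ n, seq (n + 1) = max (bd (nx (seq n))) (Order.succ (nx (seq n))) :=
      fun n => rfl
    have hlt : ∀ n, seq n < α := by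
      intro n
      induction n with
      | zero => exact hαlim.succ_lt hβ₀
      | succ n ih =>
        rw [hseqS]
        exact max_lt (hbd1 _ (hnx1 _ ih)) (hαlim.succ_lt (hsub (hnx1 _ ih)))
    set δ' := ⨆ n : ℕ, seq n with hδ'def
    have hseqle : ∀ n, seq n ≤ δ' := fun n => by rw [hδ'def]; exact Ordinal.le_iSup (fun n : ℕ => seq n) n
    have hδ'α : δ' < α := by
      refine Ordinal.iSup_lt_ord_lift ?_ hlt
      rw [hα]
      simpa using hζ
    have hβ₀δ' : β₀ < δ' := lt_of_lt_of_le (Order.lt_succ β₀) (hseq0 ▸ hseqle 0)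
    refine ⟨δ', ⟨hδ'α, ?_⟩, hβ₀δ', hδ'α⟩
    intro β hβ hβδ' γ hγ hψeq
    obtain ⟨n, hn⟩ := Ordinal.lt_iSup_iff.1 (hδ'def ▸ hβδ')
    have hns : nx (seq n) ∈ s := hnx1 _ (hlt n)
    have hβn : β < nx (seq n) := lt_trans hn (hnx2 _ (hlt n))
    have hle : ψ (f γ) ≤ ψ (f (nx (seq n))) := by
      rw [hψeq]
      exact hmonoψ β hβ _ hns hβn.le
    rcases hle.lt_or_eq with hlt' | heq
    · have hγn : γ < nx (seq n) := by
        by_contra h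
        push_neg at h
        exact absurd (hmonoψ _ hns γ hγ h) (not_le.2 hlt')
      calc γ < Order.succ (nx (seq n)) := (Order.lt_succ _).trans_le' hγn.le
        _ ≤ seq (n + 1) := by rw [hseqS]; exact le_max_right _ _
        _ ≤ δ' := hseqle (n + 1)
    · have : γ < bd (nx (seq n)) := hbd2 _ hns γ hγ heq
      calc γ < bd (nx (seq n)) := this
        _ ≤ seq (n + 1) := by rw [hseqS]; exact le_max_left _ _
        _ ≤ δ' := hseqle (n + 1)
  have hcl : ClosedIn C α := by
    intro x hx _ hunbC
    refine ⟨hx, fun β hβ hβx γ hγ hψeq => ?_⟩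
    obtain ⟨δ, hδC, hβδ, hδx⟩ := hunbC β hβx
    exact (hδC.2 β hβ hβδ γ hγ hψeq).trans hδx
  refine ⟨C, ⟨fun x hx => hx.1, hcl, hunb⟩, ?_⟩
  intro β hβ β' hβ' hlt
  have hle := hmonoψ β hβ.2 β' hβ'.2 hlt.le
  rcases hle.lt_or_eq with h | h
  · exact h
  · exact absurd (hβ'.1.2 β hβ.2 hlt β' hβ'.2 h.symm) (lt_irrefl β')
end

section
/- Suppose μ < θ < λ are infinite regular cardinals, and there exists a partial square sequence ⟨C_α | α ∈ Γ⟩ with Γ ⊆ acc(λ⁺), each C_α a club in α, coherent (C_{ᾱ} = C_α ∩ ᾱ for ᾱ ∈ acc(C_α), with ᾱ ∈ Γ), such that T₁ := {α ∈ Γ ∩ T | otp(C_α) = θ} is stationary in λ⁺, where T ⊆ E^{λ⁺}_θ. Then Prt(E^{λ⁺}_μ, θ, T) holds: there is a partition ⟨S_i | i < θ⟩ of E^{λ⁺}_μ such that T ∩ ⋂_{i<θ} Tr(S_i) is stationary. -/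
open Cardinal Set Ordinal Order

universe u

noncomputable def itS (F : Ordinal.{u} → Ordinal.{u}) : Ordinal.{u} → Ordinal.{u} :=
  lt_wf.fix fun i rec => F (Ordinal.bsup.{u,u} i fun j hj => rec j hj)

theorem itS_def (F : Ordinal.{u} → Ordinal.{u}) (i : Ordinal.{u}) :
    itS F i = F (Ordinal.bsup.{u,u} i fun j _ => itS F j) := by
  rw [itS, WellFounded.fix_eq]

theorem itS_spec {α : Ordinal.{u}} {F : Ordinal.{u} → Ordinal.{u}}
    (hF : ∀ x < α, x < F x ∧ F x < α) :
    ∀ i, i.card < α.cof → (Ordinal.bsup.{u,u} i fun j _ => itS F j) < α ∧ itS F i < α ∧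
      ∀ j < i, itS F j < itS F i := by
  intro i
  induction i using Ordinal.induction with
  | _ i IH =>
    intro hi
    have hs : (Ordinal.bsup.{u,u} i fun j _ => itS F j) < α := by
      apply Ordinal.bsup_lt_ord hi
      intro j hj
      exact (IH j hj ((Ordinal.card_le_card hj.le).trans_lt hi)).2.1
    have h2 := hF _ hs
    refine ⟨hs, ?_, ?_⟩
    · rw [itS_def]; exact h2.2
    · intro j hj
      calc itS F j ≤ _ := Ordinal.le_bsup _ j hj
        _ < F _ := h2.1
        _ = itS F i := (itS_def F i).symm

theorem cof_bsup_eq {ρ : Ordinal.{u}} (hρ : Order.IsSuccLimit ρ) {g : Ordinal.{u} → Ordinal.{u}}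
    (hg : ∀ j < ρ, ∀ k < ρ, j < k → g j < g k) :
    (Ordinal.bsup.{u,u} ρ fun j _ => g j).cof = ρ.cof := by
  set Λ := Ordinal.bsup.{u,u} ρ fun j _ => g j with hΛ
  have hmon : ∀ j < ρ, ∀ k < ρ, j ≤ k → g j ≤ g k := by
    intro j hj k hk hjk
    rcases hjk.lt_or_eq with h | h
    · exact (hg j hj k hk h).le
    · exact h ▸ le_rfl
  have hlt : ∀ j (hj : j < ρ), g j < Λ := fun j hj =>
    (hg j hj _ (hρ.succ_lt hj) (lt_succ j)).trans_le (Ordinal.le_bsup _ _ (hρ.succ_lt hj))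
  apply le_antisymm
  · obtain ⟨f', hf'⟩ := Ordinal.exists_blsub_cof ρ
    have hf'lt : ∀ b (hb : b < ρ.cof.ord), f' b hb < ρ :=
      fun b hb => lt_of_lt_of_eq (Ordinal.lt_blsub f' b hb) hf'
    have claim : Ordinal.blsub.{u,u} ρ.cof.ord (fun b hb => g (f' b hb)) = Λ := by
      apply le_antisymm
      · rw [Ordinal.blsub_le_iff]
        intro b hb; exact hlt _ (hf'lt b hb)
      · rw [hΛ, Ordinal.bsup_le_iff]
        intro j hj
        have hjj : j < Ordinal.blsub.{u,u} ρ.cof.ord f' := lt_of_lt_of_eq hj hf'.symm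
        obtain ⟨b, hb, hjb⟩ := Ordinal.lt_blsub_iff.1 hjj
        exact le_of_lt (lt_of_le_of_lt (hmon j hj _ (hf'lt b hb) hjb)
          (Ordinal.lt_blsub (fun b hb => g (f' b hb)) b hb))
    calc Λ.cof = (Ordinal.blsub.{u,u} ρ.cof.ord (fun b hb => g (f' b hb))).cof := by rw [claim]
      _ ≤ (ρ.cof.ord).card := Ordinal.cof_blsub_le _
      _ = ρ.cof := card_ord _
  · obtain ⟨f'', hf''⟩ := Ordinal.exists_blsub_cof Λ
    have hchoice : ∀ b (hb : b < Λ.cof.ord), ∃ j, ∃ hj : j < ρ, f'' b hb < g j := by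
      intro b hb
      have h1 : f'' b hb < Λ := lt_of_lt_of_eq (Ordinal.lt_blsub f'' b hb) hf''
      exact (Ordinal.lt_bsup _).1 h1
    choose J hJρ hJ using hchoice
    have claim : Ordinal.blsub.{u,u} Λ.cof.ord J = ρ := by
      apply le_antisymm
      · rw [Ordinal.blsub_le_iff]; exact hJρ
      · apply le_of_forall_lt
        intro β hβ
        have h1 : g β < Ordinal.blsub.{u,u} Λ.cof.ord f'' := lt_of_lt_of_eq (hlt β hβ) hf''.symm
        obtain ⟨b, hb, hβb⟩ := Ordinal.lt_blsub_iff.1 h1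
        have h2 : β < J b hb := by
          by_contra hcon
          push_neg at hcon
          exact absurd (hβb.trans_lt (hJ b hb)) (not_lt.2 (hmon _ (hJρ b hb) _ hβ hcon))
        exact h2.trans (Ordinal.lt_blsub J b hb)
    calc ρ.cof = (Ordinal.blsub.{u,u} Λ.cof.ord J).cof := by rw [claim]
      _ ≤ (Λ.cof.ord).card := Ordinal.cof_blsub_le _
      _ = Λ.cof := card_ord _
theorem statIn_mono {S S' : Set Ordinal.{u}} {κ : Ordinal.{u}} (h : S ⊆ S')
    (hS : StatIn S κ) : StatIn S' κ :=
  fun Cc hC => (hS Cc hC).imp fun _ hx => ⟨h hx.1, hx.2⟩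

theorem not_statIn {S : Set Ordinal.{u}} {κ : Ordinal.{u}} (h : ¬ StatIn S κ) :
    ∃ Cc, ClubIn Cc κ ∧ ∀ β ∈ S, β ∉ Cc := by
  unfold StatIn at h
  push_neg at h
  obtain ⟨Cc, hC, hE⟩ := h
  exact ⟨Cc, hC, fun β hβ hβC => (Set.eq_empty_iff_forall_notMem.1 hE β ⟨hβ, hβC⟩)⟩

open scoped Classical in
/-- choice of a next element of C above y (and below α). -/
noncomputable def nxt (C : Set Ordinal.{u}) (α y : Ordinal.{u}) : Ordinal.{u} :=
  if h : ∃ γ ∈ C, y < γ ∧ γ < α then h.choose else y + 1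

theorem nxt_spec {C : Set Ordinal.{u}} {α y : Ordinal.{u}} (hU : UnbIn C α) (hy : y < α) :
    nxt C α y ∈ C ∧ y < nxt C α y ∧ nxt C α y < α := by
  have h : ∃ γ ∈ C, y < γ ∧ γ < α := hU y hy
  rw [nxt, dif_pos h]
  exact ⟨h.choose_spec.1, h.choose_spec.2.1, h.choose_spec.2.2⟩

theorem clubIn_Ioo_s5 {κ c : Ordinal.{u}} (hκ : Order.IsSuccLimit κ) (hc : c < κ) :
    ClubIn (Set.Ioo c κ) κ := by
  refine ⟨fun x hx => hx.2, ?_, ?_⟩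
  · intro β hβ hβ0 hU
    obtain ⟨γ, hγ, _, hγβ⟩ := hU 0 hβ0
    exact ⟨hγ.1.trans hγβ, hβ⟩
  · intro x hx
    exact ⟨(x ⊔ c) + 1, ⟨lt_of_le_of_lt le_sup_right (lt_succ _),
      hκ.succ_lt (sup_lt_iff.2 ⟨hx, hc⟩)⟩, lt_of_le_of_lt le_sup_left (lt_succ _),
      hκ.succ_lt (sup_lt_iff.2 ⟨hx, hc⟩)⟩

theorem itS_succ {α : Ordinal.{u}} {F : Ordinal.{u} → Ordinal.{u}}
    (hF : ∀ x < α, x < F x ∧ F x < α) {j : Ordinal.{u}} (hj : (succ j).card < α.cof) :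
    itS F (succ j) = F (itS F j) := by
  rw [itS_def]
  congr 1
  apply le_antisymm
  · rw [Ordinal.bsup_le_iff]
    intro k hk
    rcases (lt_succ_iff.1 hk).lt_or_eq with h | h
    · exact ((itS_spec hF j ((Ordinal.card_le_card (le_succ j)).trans_lt hj)).2.2 k h).le
    · exact h ▸ le_rfl
  · exact Ordinal.le_bsup _ j (lt_succ j)

theorem itS_limit {α ρ : Ordinal.{u}} {F : Ordinal.{u} → Ordinal.{u}}
    (hF : ∀ x < α, x < F x ∧ F x < α) (hρ : Order.IsSuccLimit ρ) (hρα : ρ.card < α.cof) :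
    (Ordinal.bsup.{u,u} ρ fun j _ => itS F j) < α ∧
    0 < (Ordinal.bsup.{u,u} ρ fun j _ => itS F j) ∧
    (∀ j < ρ, itS F j < Ordinal.bsup.{u,u} ρ fun j _ => itS F j) ∧
    (∀ x < (Ordinal.bsup.{u,u} ρ fun j _ => itS F j), ∃ j < ρ, x < itS F j) ∧
    (Ordinal.bsup.{u,u} ρ fun j _ => itS F j).cof = ρ.cof := by
  have hcard : ∀ j, j < ρ → j.card < α.cof :=
    fun j hj => (Ordinal.card_le_card hj.le).trans_lt hρα
  have hmono : ∀ j < ρ, ∀ k < ρ, j < k → itS F j < itS F k :=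
    fun j _ k hk hjk => (itS_spec hF k (hcard k hk)).2.2 j hjk
  have hval : ∀ j, j < ρ → itS F j < α := fun j hj => (itS_spec hF j (hcard j hj)).2.1
  have h1 : (Ordinal.bsup.{u,u} ρ fun j _ => itS F j) < α :=
    Ordinal.bsup_lt_ord hρα fun j hj => hval j hj
  have hjlt : ∀ j < ρ, itS F j < Ordinal.bsup.{u,u} ρ fun j _ => itS F j := by
    intro j hj
    exact (hmono j hj _ (hρ.succ_lt hj) (lt_succ j)).trans_le
      (Ordinal.le_bsup _ _ (hρ.succ_lt hj))
  refine ⟨h1, ?_, hjlt, ?_, cof_bsup_eq hρ hmono⟩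
  · exact lt_of_le_of_lt (zero_le (a := _)) (hjlt 0 hρ.pos)
  · intro x hx
    obtain ⟨j, hj, hxj⟩ := (Ordinal.lt_bsup _).1 hx
    exact ⟨j, hj, hxj⟩

theorem clubIn_inter {α : Ordinal.{u}} (hα : ℵ₀ < α.cof) {Cc D : Set Ordinal.{u}}
    (hC : ClubIn Cc α) (hD : ClubIn D α) : ClubIn (Cc ∩ D) α := by
  have hαl : Order.IsSuccLimit α := Ordinal.aleph0_le_cof.1 hα.le
  refine ⟨fun x hx => hC.1 hx.1, ?_, ?_⟩
  · intro β hβ hβ0 hU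
    refine ⟨hC.2.1 β hβ hβ0 fun x hx => ?_, hD.2.1 β hβ hβ0 fun x hx => ?_⟩
    · obtain ⟨γ, hγ, h1, h2⟩ := hU x hx; exact ⟨γ, hγ.1, h1, h2⟩
    · obtain ⟨γ, hγ, h1, h2⟩ := hU x hx; exact ⟨γ, hγ.2, h1, h2⟩
  · intro x hx
    set F : Ordinal.{u} → Ordinal.{u} := fun y => nxt D α (nxt Cc α (y ⊔ x)) with hFdef
    have hF : ∀ y < α, y < F y ∧ F y < α := by
      intro y hy
      have h1 := nxt_spec hC.2.2 (sup_lt_iff.2 ⟨hy, hx⟩)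
      have h2 := nxt_spec hD.2.2 h1.2.2
      exact ⟨(le_sup_left.trans_lt h1.2.1).trans h2.2.1, h2.2.2⟩
    have hxF : ∀ y < α, x < F y := by
      intro y hy
      have h1 := nxt_spec hC.2.2 (sup_lt_iff.2 ⟨hy, hx⟩)
      have h2 := nxt_spec hD.2.2 h1.2.2
      exact (le_sup_right.trans_lt h1.2.1).trans h2.2.1
    have hωcard : (ω : Ordinal.{u}).card < α.cof := by
      rwa [Ordinal.card_omega0]
    have hlim := itS_limit hF isSuccLimit_omega0 hωcard
    set Λ := Ordinal.bsup.{u,u} ω fun j _ => itS F j with hΛdef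
    have hscard : ∀ j : Ordinal.{u}, j < ω → (succ j).card < α.cof :=
      fun j hj => (Ordinal.card_le_card (isSuccLimit_omega0.succ_lt hj).le).trans_lt hωcard
    have hjα : ∀ j < (ω : Ordinal.{u}), itS F j < α :=
      fun j hj => (itS_spec hF j ((Ordinal.card_le_card hj.le).trans_lt hωcard)).2.1
    have hmemC : ∀ z < Λ, ∃ γ ∈ Cc, z < γ ∧ γ < Λ := by
      intro z hz
      obtain ⟨j, hj, hzj⟩ := hlim.2.2.2.1 z hz
      have h1 := nxt_spec hC.2.2 (sup_lt_iff.2 ⟨hjα j hj, hx⟩)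
      have hsucc : itS F (succ j) = F (itS F j) := itS_succ hF (hscard j hj)
      have h2 := nxt_spec hD.2.2 h1.2.2
      refine ⟨nxt Cc α (itS F j ⊔ x), h1.1, lt_of_lt_of_le hzj (le_sup_left.trans h1.2.1.le), ?_⟩
      calc nxt Cc α (itS F j ⊔ x) < F (itS F j) := h2.2.1
        _ = itS F (succ j) := hsucc.symm
        _ < Λ := hlim.2.2.1 _ (isSuccLimit_omega0.succ_lt hj)
    have hmemD : ∀ z < Λ, ∃ γ ∈ D, z < γ ∧ γ < Λ := by
      intro z hz
      obtain ⟨j, hj, hzj⟩ := hlim.2.2.2.1 z hz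
      have h1 := nxt_spec hC.2.2 (sup_lt_iff.2 ⟨hjα j hj, hx⟩)
      have hsucc : itS F (succ j) = F (itS F j) := itS_succ hF (hscard j hj)
      have h2 := nxt_spec hD.2.2 h1.2.2
      refine ⟨itS F (succ j), ?_, ?_, hlim.2.2.1 _ (isSuccLimit_omega0.succ_lt hj)⟩
      · rw [hsucc]; exact h2.1
      · exact hzj.trans (lt_of_le_of_lt (le_sup_left.trans h1.2.1.le) (hsucc ▸ h2.2.1))
    refine ⟨Λ, ⟨hC.2.1 Λ hlim.1 hlim.2.1 hmemC, hD.2.1 Λ hlim.1 hlim.2.1 hmemD⟩, ?_, hlim.1⟩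
    · calc x < F 0 := hxF 0 hαl.pos
        _ = itS F 0 := by
            rw [itS_def]
            congr 1
            exact ((Ordinal.bsup_eq_zero_iff).2 fun i hi => absurd hi (not_lt_of_ge (zero_le (a := i)))).symm
        _ < Λ := hlim.2.2.1 0 omega0_pos

theorem itS_zero (F : Ordinal.{u} → Ordinal.{u}) : itS F 0 = F 0 := by
  rw [itS_def]
  congr 1
  exact (Ordinal.bsup_eq_zero_iff).2 fun i hi => absurd hi (not_lt_of_ge (zero_le (a := i)))

theorem clubIn_diag {θ : Cardinal.{u}} (hθ : θ.IsRegular) (hθω : ℵ₀ < θ)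
    (Cs : Ordinal.{u} → Set Ordinal.{u}) (hCs : ∀ γ < θ.ord, ClubIn (Cs γ) θ.ord) :
    ClubIn {β | β < θ.ord ∧ ∀ γ < β, β ∈ Cs γ} θ.ord := by
  have hκl : Order.IsSuccLimit θ.ord := isSuccLimit_ord hθ.aleph0_le
  have hcof : θ.ord.cof = θ := hθ.cof_eq
  refine ⟨fun β hβ => hβ.1, ?_, ?_⟩
  · intro β hβ hβ0 hU
    refine ⟨hβ, fun γ hγ => ?_⟩
    refine (hCs γ (hγ.trans hβ)).2.1 β hβ hβ0 fun z hz => ?_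
    obtain ⟨δ, hδ, h1, h2⟩ := hU (z ⊔ γ) (sup_lt_iff.2 ⟨hz, hγ⟩)
    exact ⟨δ, hδ.2 γ (le_sup_right.trans_lt h1), le_sup_left.trans_lt h1, h2⟩
  · intro x hx
    set F : Ordinal.{u} → Ordinal.{u} :=
      fun y => ((Ordinal.bsup.{u,u} y fun γ _ => nxt (Cs γ) θ.ord y) ⊔ (y ⊔ x)) + 1 with hFdef
    have hnxt : ∀ y < θ.ord, ∀ γ < y, nxt (Cs γ) θ.ord y ∈ Cs γ ∧ y < nxt (Cs γ) θ.ord y ∧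
        nxt (Cs γ) θ.ord y < θ.ord :=
      fun y hy γ hγ => nxt_spec (hCs γ (hγ.trans hy)).2.2 hy
    have hF : ∀ y < θ.ord, y < F y ∧ F y < θ.ord := by
      intro y hy
      refine ⟨lt_of_le_of_lt (le_sup_left.trans le_sup_right) (lt_succ _), ?_⟩
      apply hκl.succ_lt
      refine sup_lt_iff.2 ⟨?_, sup_lt_iff.2 ⟨hy, hx⟩⟩
      refine Ordinal.bsup_lt_ord ?_ fun γ hγ => (hnxt y hy γ hγ).2.2
      rw [hcof]; exact lt_ord.1 hy
    have hxF : ∀ y, x < F y := fun y =>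
      lt_of_le_of_lt (le_sup_right.trans le_sup_right) (lt_succ _)
    have hωcard : (ω : Ordinal.{u}).card < θ.ord.cof := by
      rw [Ordinal.card_omega0, hcof]; exact hθω
    have hlim := itS_limit hF isSuccLimit_omega0 hωcard
    set Λ := Ordinal.bsup.{u,u} ω fun j _ => itS F j with hΛdef
    have hjκ : ∀ j < (ω : Ordinal.{u}), itS F j < θ.ord :=
      fun j hj => (itS_spec hF j ((Ordinal.card_le_card hj.le).trans_lt hωcard)).2.1
    refine ⟨Λ, ⟨hlim.1, fun γ hγ => ?_⟩, ?_, hlim.1⟩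
    · refine (hCs γ (hγ.trans hlim.1)).2.1 Λ hlim.1 hlim.2.1 fun z hz => ?_
      obtain ⟨j, hj, hzj⟩ := hlim.2.2.2.1 (z ⊔ γ) (sup_lt_iff.2 ⟨hz, hγ⟩)
      have hc := hnxt (itS F j) (hjκ j hj) γ (le_sup_right.trans_lt hzj)
      refine ⟨nxt (Cs γ) θ.ord (itS F j), hc.1,
        (le_sup_left.trans_lt hzj).trans hc.2.1, ?_⟩
      calc nxt (Cs γ) θ.ord (itS F j)
          ≤ Ordinal.bsup.{u,u} (itS F j) (fun γ' _ => nxt (Cs γ') θ.ord (itS F j)) :=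
            Ordinal.le_bsup _ γ (le_sup_right.trans_lt hzj)
        _ < F (itS F j) := lt_of_le_of_lt le_sup_left (lt_succ _)
        _ = itS F (succ j) := (itS_succ hF ((Ordinal.card_le_card
            (isSuccLimit_omega0.succ_lt hj).le).trans_lt hωcard)).symm
        _ < Λ := hlim.2.2.1 _ (isSuccLimit_omega0.succ_lt hj)
    · calc x < F 0 := hxF 0
        _ = itS F 0 := (itS_zero F).symm
        _ < Λ := hlim.2.2.1 0 omega0_pos

theorem fodor {θ : Cardinal.{u}} (hθ : θ.IsRegular) (hθω : ℵ₀ < θ) {S : Set Ordinal.{u}}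
    (hS : StatIn S θ.ord) {f : Ordinal.{u} → Ordinal.{u}} (hf : ∀ β ∈ S, f β < β) :
    ∃ γ < θ.ord, StatIn {β | β ∈ S ∧ f β = γ} θ.ord := by
  by_contra hcon
  push_neg at hcon
  have key : ∀ γ, ∃ Cc, ClubIn Cc θ.ord ∧ (γ < θ.ord → ∀ β ∈ S, f β = γ → β ∉ Cc) := by
    intro γ
    by_cases hγ : γ < θ.ord
    · obtain ⟨Cc, hC, hE⟩ := not_statIn (hcon γ hγ)
      exact ⟨Cc, hC, fun _ β hβ hfβ => hE β ⟨hβ, hfβ⟩⟩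
    · exact ⟨Set.Ioo 0 θ.ord, clubIn_Ioo_s5 (isSuccLimit_ord hθ.aleph0_le)
        (isSuccLimit_ord hθ.aleph0_le).pos, fun h => absurd h hγ⟩
  choose Cs hCs1 hCs2 using key
  obtain ⟨β, hβS, hβΔ⟩ := hS _ (clubIn_diag hθ hθω Cs fun γ _ => hCs1 γ)
  have hfβ : f β < β := hf β hβS
  exact hCs2 (f β) (hfβ.trans hβΔ.1) β hβS rfl (hβΔ.2 (f β) hfβ)

theorem statIn_Ecof {μ θ : Cardinal.{u}} (hμ : μ.IsRegular) (hθ : θ.IsRegular) (hμθ : μ < θ) :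
    StatIn (Ecof θ.ord μ) θ.ord := by
  intro D hD
  have hcof : θ.ord.cof = θ := hθ.cof_eq
  set F := fun y => nxt D θ.ord y with hFdef
  have hF : ∀ y < θ.ord, y < F y ∧ F y < θ.ord :=
    fun y hy => ⟨(nxt_spec hD.2.2 hy).2.1, (nxt_spec hD.2.2 hy).2.2⟩
  have hρl : Order.IsSuccLimit (μ.ord) := isSuccLimit_ord hμ.aleph0_le
  have hρcard : (μ.ord).card < θ.ord.cof := by rw [card_ord, hcof]; exact hμθ
  have hlim := itS_limit hF hρl hρcard
  set Λ := Ordinal.bsup.{u,u} μ.ord fun j _ => itS F j with hΛdef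
  have hmemD : ∀ j < μ.ord, itS F j ∈ D := by
    intro j hj
    have h1 := (itS_spec hF j ((Ordinal.card_le_card hj.le).trans_lt hρcard)).1
    rw [itS_def]
    exact (nxt_spec hD.2.2 h1).1
  have hΛD : Λ ∈ D := by
    refine hD.2.1 Λ hlim.1 hlim.2.1 fun z hz => ?_
    obtain ⟨j, hj, hzj⟩ := hlim.2.2.2.1 z hz
    exact ⟨itS F j, hmemD j hj, hzj, hlim.2.2.1 j hj⟩
  exact ⟨Λ, ⟨hlim.1, hlim.2.2.2.2.trans hμ.cof_eq⟩, hΛD⟩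

theorem solovay {μ θ : Cardinal.{u}} (hμ : μ.IsRegular) (hθ : θ.IsRegular) (hμθ : μ < θ) :
    ∃ A : Ordinal.{u} → Set Ordinal.{u},
      (∀ i < θ.ord, A i ⊆ Ecof θ.ord μ) ∧
      (∀ i < θ.ord, StatIn (A i) θ.ord) ∧
      Set.PairwiseDisjoint (Set.Iio θ.ord) A := by
  have hθω : ℵ₀ < θ := lt_of_le_of_lt hμ.aleph0_le hμθ
  have hκl : Order.IsSuccLimit θ.ord := isSuccLimit_ord hθ.aleph0_le
  have hcof : θ.ord.cof = θ := hθ.cof_eq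
  set E := Ecof θ.ord μ with hEdef
  have hfs0 : ∀ ξ : Ordinal.{u}, ∃ fs : Ordinal.{u} → Ordinal.{u}, ξ.cof = μ →
      ((∀ i < μ.ord, fs i < ξ) ∧ (∀ x < ξ, ∃ i < μ.ord, x ≤ fs i)) := by
    intro ξ
    by_cases hξ : ξ.cof = μ
    · obtain ⟨f, hf⟩ := Ordinal.exists_fundamental_sequence ξ
      have hord : ξ.cof.ord = μ.ord := by rw [hξ]
      refine ⟨fun i => if h : i < ξ.cof.ord then f i h else 0, fun _ => ⟨?_, ?_⟩⟩
      · intro i hi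
        have h' : i < ξ.cof.ord := by rw [hord]; exact hi
        simp only [dif_pos h']
        exact hf.lt h'
      · intro x hx
        have hx' : x < Ordinal.blsub ξ.cof.ord f := by rw [hf.blsub_eq]; exact hx
        obtain ⟨i, hi, hxi⟩ := Ordinal.lt_blsub_iff.1 hx'
        refine ⟨i, by rw [← hord]; exact hi, ?_⟩
        simp only [dif_pos hi]; exact hxi
    · exact ⟨fun _ => 0, fun h => absurd h hξ⟩
  choose fs hfs using hfs0
  have claim : ∃ i < μ.ord, ∀ η < θ.ord, StatIn {ξ | ξ ∈ E ∧ η ≤ fs ξ i} θ.ord := by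
    by_contra hcl
    push_neg at hcl
    have h2 : ∀ i, ∃ p : Ordinal.{u} × Set Ordinal.{u}, i < μ.ord →
        p.1 < θ.ord ∧ ClubIn p.2 θ.ord ∧ ∀ ξ ∈ E, ξ ∈ p.2 → fs ξ i < p.1 := by
      intro i
      by_cases hi : i < μ.ord
      · obtain ⟨η, hη, hst⟩ := hcl i hi
        obtain ⟨Cc, hC, hE'⟩ := not_statIn hst
        refine ⟨(η, Cc), fun _ => ⟨hη, hC, fun ξ hξ hξC => ?_⟩⟩
        by_contra hle
        push_neg at hle
        exact hE' ξ ⟨hξ, hle⟩ hξC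
      · exact ⟨(0, ∅), fun h => absurd h hi⟩
    choose p hp using h2
    set η' := Ordinal.bsup.{u,u} μ.ord (fun i _ => (p i).1) with hη'def
    have hη'κ : η' < θ.ord := by
      refine Ordinal.bsup_lt_ord (by rw [card_ord, hcof]; exact hμθ) fun i hi => (hp i hi).1
    set Cs : Ordinal.{u} → Set Ordinal.{u} :=
      fun γ => if h : γ < μ.ord then (p γ).2 else Set.Ioo 0 θ.ord with hCsdef
    have hCs : ∀ γ < θ.ord, ClubIn (Cs γ) θ.ord := by
      intro γ _
      by_cases h : γ < μ.ord
      · simpa only [hCsdef, dif_pos h] using (hp γ h).2.1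
      · simpa only [hCsdef, dif_neg h] using clubIn_Ioo_s5 hκl hκl.pos
    have hΔ := clubIn_diag hθ hθω Cs hCs
    have hIoo : ClubIn (Set.Ioo (μ.ord ⊔ η') θ.ord) θ.ord :=
      clubIn_Ioo_s5 hκl (sup_lt_iff.2 ⟨ord_lt_ord.2 hμθ, hη'κ⟩)
    have hW := clubIn_inter (by rw [hcof]; exact hθω) hΔ hIoo
    obtain ⟨ξ, hξE, hξW⟩ := statIn_Ecof hμ hθ hμθ _ hW
    have hξμ : ξ.cof = μ := hξE.2
    have hgt : μ.ord ⊔ η' < ξ := hξW.2.1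
    have hmem : ∀ i < μ.ord, ξ ∈ (p i).2 := by
      intro i hi
      have h2' : ξ ∈ Cs i := hξW.1.2 i ((hi.trans_le le_sup_left).trans hgt)
      simpa only [hCsdef, dif_pos hi] using h2'
    obtain ⟨i, hi, hle⟩ := (hfs ξ hξμ).2 η' (le_sup_right.trans_lt hgt)
    have hlt := (hp i hi).2.2 ξ hξE (hmem i hi)
    exact absurd (hle.trans_lt hlt) (not_lt.2 (Ordinal.le_bsup (fun i _ => (p i).1) i hi))
  obtain ⟨i₀, hi₀, hstat⟩ := claim
  set g : Ordinal.{u} → Ordinal.{u} := fun ξ => fs ξ i₀ with hgdef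
  have hreg : ∀ ξ ∈ E, g ξ < ξ := fun ξ hξ => (hfs ξ hξ.2).1 i₀ hi₀
  have hfib : ∀ η, ∃ γ, η < θ.ord →
      (η ≤ γ ∧ γ < θ.ord ∧ StatIn {ξ | ξ ∈ E ∧ g ξ = γ} θ.ord) := by
    intro η
    by_cases hη : η < θ.ord
    · obtain ⟨γ, hγκ, hγst⟩ := fodor hθ hθω (hstat η hη) (fun β hβ => hreg β hβ.1)
      have hsub : {β | β ∈ {ξ | ξ ∈ E ∧ η ≤ fs ξ i₀} ∧ g β = γ} ⊆ {ξ | ξ ∈ E ∧ g ξ = γ} :=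
        fun β hβ => ⟨hβ.1.1, hβ.2⟩
      obtain ⟨ξ, hξ⟩ := hγst _ (clubIn_Ioo_s5 hκl hκl.pos)
      exact ⟨γ, fun _ => ⟨hξ.1.1.2.trans_eq hξ.1.2, hγκ, statIn_mono hsub hγst⟩⟩
    · exact ⟨0, fun h => absurd h hη⟩
  choose uu huu using hfib
  set Fw : Ordinal.{u} → Ordinal.{u} := fun x => uu (x + 1) with hFwdef
  have hsucc1 : ∀ x < θ.ord, x + 1 < θ.ord := by
    intro x hx
    rw [Ordinal.add_one_eq_succ]
    exact hκl.succ_lt hx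
  have hFwspec : ∀ x < θ.ord, x < Fw x ∧ Fw x < θ.ord := by
    intro x hx
    have h := huu (x + 1) (hsucc1 x hx)
    constructor
    · calc x < x + 1 := by rw [Ordinal.add_one_eq_succ]; exact lt_succ x
        _ ≤ uu (x + 1) := h.1
    · exact h.2.1
  set w := itS Fw with hwdef
  have hwstat : ∀ i < θ.ord, StatIn {ξ | ξ ∈ E ∧ g ξ = w i} θ.ord := by
    intro i hi
    have hicard : i.card < θ.ord.cof := by rw [hcof]; exact lt_ord.1 hi
    have hbs := (itS_spec hFwspec i hicard).1
    have heq : w i = uu ((Ordinal.bsup.{u,u} i fun j _ => itS Fw j) + 1) := itS_def Fw i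
    rw [heq]
    exact (huu _ (hsucc1 _ hbs)).2.2
  refine ⟨fun i => {ξ | ξ ∈ E ∧ g ξ = w i}, fun i _ ξ hξ => hξ.1, hwstat, ?_⟩
  intro i hi j hj hij
  have hne : w i ≠ w j := by
    rcases hij.lt_or_gt with h | h
    · exact ne_of_lt ((itS_spec hFwspec j (by rw [hcof]; exact lt_ord.1 hj)).2.2 i h)
    · exact (ne_of_lt ((itS_spec hFwspec i (by rw [hcof]; exact lt_ord.1 hi)).2.2 j h)).symm
  exact Set.disjoint_left.2 fun ξ hξi hξj => hne (hξi.2.symm.trans hξj.2)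

theorem otp_agree {f g : Ordinal.{u} → Ordinal.{u}} {o o' : Ordinal.{u}}
    (hf : StrictMonoOn f (Set.Iio o)) (hg : StrictMonoOn g (Set.Iio o'))
    (h : f '' Set.Iio o = g '' Set.Iio o') :
    ∀ i, i < o → i < o' → f i = g i := by
  intro i
  induction i using Ordinal.induction with
  | _ i IH =>
    intro hio hio'
    have hfi : f i ∈ g '' Set.Iio o' := h ▸ Set.mem_image_of_mem f hio
    obtain ⟨j, hj, hje⟩ := hfi
    rcases lt_trichotomy j i with hji | hji | hji
    · exfalso
      have h1 : f j = g j := IH j hji (hji.trans hio) hj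
      have h2 : f j < f i := hf (Set.mem_Iio.2 (hji.trans hio)) hio hji
      rw [h1, hje] at h2
      exact lt_irrefl _ h2
    · rw [hji] at hje; exact hje.symm
    · exfalso
      have h1 : g i < g j := hg (Set.mem_Iio.2 (hji.trans hj)) hj hji
      rw [hje] at h1
      have hgi : g i ∈ f '' Set.Iio o := h.symm ▸ Set.mem_image_of_mem g (hji.trans hj)
      obtain ⟨k, hk, hke⟩ := hgi
      have hki : k < i := by
        by_contra hcon
        push_neg at hcon
        have : f i ≤ f k := hf.monotoneOn hio hk hcon
        rw [hke] at this
        exact absurd h1 (not_lt.2 this)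
      have h2 : f k = g k := IH k hki hk (hki.trans (hji.trans hj))
      rw [h2] at hke
      have h3 : g k < g i := hg (Set.mem_Iio.2 ((hki.trans hji).trans hj)) (hji.trans hj) hki
      rw [hke] at h3
      exact lt_irrefl _ h3

theorem otp_unique {f g : Ordinal.{u} → Ordinal.{u}} {o o' : Ordinal.{u}}
    (hf : StrictMonoOn f (Set.Iio o)) (hg : StrictMonoOn g (Set.Iio o'))
    (h : f '' Set.Iio o = g '' Set.Iio o') : o = o' := by
  have haux : ∀ {f g : Ordinal.{u} → Ordinal.{u}} {o o' : Ordinal.{u}},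
      StrictMonoOn f (Set.Iio o) → StrictMonoOn g (Set.Iio o') →
      f '' Set.Iio o = g '' Set.Iio o' → o ≤ o' := by
    intro f g o o' hf hg h
    by_contra hlt
    push_neg at hlt
    have hfo' : f o' ∈ g '' Set.Iio o' := h ▸ Set.mem_image_of_mem f hlt
    obtain ⟨j, hj, hje⟩ := hfo'
    have h1 : f j < f o' := hf (Set.mem_Iio.2 (hj.trans hlt)) hlt hj
    rw [otp_agree hf hg h j (hj.trans hlt) hj, hje] at h1
    exact lt_irrefl _ h1
  exact le_antisymm (haux hf hg h) (haux hg hf h.symm)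

theorem otp_eq_of {f : Ordinal.{u} → Ordinal.{u}} {o : Ordinal.{u}} {x : Set Ordinal.{u}}
    (hf : StrictMonoOn f (Set.Iio o)) (him : f '' Set.Iio o = x) : otp x = o := by
  have hne : {o' : Ordinal.{u} | ∃ f' : Ordinal.{u} → Ordinal.{u},
      StrictMonoOn f' (Set.Iio o') ∧ f' '' Set.Iio o' = x}.Nonempty := ⟨o, f, hf, him⟩
  obtain ⟨f', hf', him'⟩ := csInf_mem hne
  exact otp_unique hf' hf (him'.trans him.symm)

theorem otp_enum {x : Set Ordinal.{u}} {b : Ordinal.{u}} (hb : ∀ y ∈ x, y < b) :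
    ∃ f : Ordinal.{u} → Ordinal.{u},
      StrictMonoOn f (Set.Iio (otp x)) ∧ f '' Set.Iio (otp x) = x := by
  set s := x ∪ Set.Ici b with hsdef
  have hy : ¬ BddAbove s := by
    rintro ⟨c, hc⟩
    have h1 : ((b ⊔ c) + 1 : Ordinal.{u}) ∈ s := by
      refine Or.inr (Set.mem_Ici.2 ?_)
      rw [Ordinal.add_one_eq_succ]
      exact (le_sup_left : b ≤ b ⊔ c).trans (le_succ _)
    have h2 := hc h1
    have h3 : c < (b ⊔ c) + 1 := by
      rw [Ordinal.add_one_eq_succ]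
      exact le_sup_right.trans_lt (lt_succ _)
    exact absurd (h3.trans_le h2) (lt_irrefl c)
  obtain ⟨o₀, ho₀⟩ := Ordinal.enumOrd_surjective hy (Or.inr (le_refl b) : b ∈ s)
  have him : Ordinal.enumOrd s '' Set.Iio o₀ = x := by
    ext z
    constructor
    · rintro ⟨i, hi, rfl⟩
      have hmem := Ordinal.enumOrd_mem hy i
      have hlt : Ordinal.enumOrd s i < b := by
        rw [← ho₀]; exact Ordinal.enumOrd_strictMono hy hi
      rcases hmem with hx | hI
      · exact hx
      · exact absurd hlt (not_lt.2 hI)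
    · intro hz
      obtain ⟨i, hi⟩ := Ordinal.enumOrd_surjective hy (Or.inl hz : z ∈ s)
      refine ⟨i, ?_, hi⟩
      have h3 : Ordinal.enumOrd s i < Ordinal.enumOrd s o₀ := by
        rw [hi, ho₀]; exact hb z hz
      exact (Ordinal.enumOrd_strictMono hy).lt_iff_lt.1 h3
  have hotp : otp x = o₀ :=
    otp_eq_of ((Ordinal.enumOrd_strictMono hy).strictMonoOn _) him
  rw [hotp]
  exact ⟨Ordinal.enumOrd s, (Ordinal.enumOrd_strictMono hy).strictMonoOn _, him⟩

theorem enum_bsup {α θo : Ordinal.{u}} {Cα : Set Ordinal.{u}} (hC : ClubIn Cα α)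
    {e : Ordinal.{u} → Ordinal.{u}} (he : StrictMonoOn e (Set.Iio θo))
    (him : e '' Set.Iio θo = Cα) {ξ : Ordinal.{u}} (hξ : ξ < θo) (hlim : Order.IsSuccLimit ξ) :
    Ordinal.bsup.{u,u} ξ (fun η _ => e η) = e ξ := by
  have hemem : ∀ η < θo, e η ∈ Cα := fun η hη => him ▸ Set.mem_image_of_mem e hη
  have heα : ∀ η < θo, e η < α := fun η hη => hC.1 (hemem η hη)
  have hle : Ordinal.bsup.{u,u} ξ (fun η _ => e η) ≤ e ξ :=
    Ordinal.bsup_le fun η hη => (he (Set.mem_Iio.2 (hη.trans hξ)) hξ hη).le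
  rcases hle.lt_or_eq with hlt | heq
  · exfalso
    set s := Ordinal.bsup.{u,u} ξ (fun η _ => e η) with hsdef
    have hstep : ∀ η < ξ, e η < s := by
      intro η hη
      exact lt_of_lt_of_le (he (Set.mem_Iio.2 (hη.trans hξ))
        (Set.mem_Iio.2 ((hlim.succ_lt hη).trans hξ)) (lt_succ η))
        (Ordinal.le_bsup _ _ (hlim.succ_lt hη))
    have hs0 : 0 < s :=
      lt_of_le_of_lt (zero_le (a := e 0)) (hstep 0 hlim.pos)
    have hunb : UnbIn Cα s := by
      intro z hz
      obtain ⟨η, hη, hzη⟩ := (Ordinal.lt_bsup _).1 hz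
      exact ⟨e η, hemem η (hη.trans hξ), hzη, hstep η hη⟩
    have hsC : s ∈ Cα := hC.2.1 s (hlt.trans (heα ξ hξ)) hs0 hunb
    rw [← him] at hsC
    obtain ⟨η₀, hη₀, hη₀e⟩ := hsC
    have hη₀ξ : η₀ < ξ := by
      by_contra hcon
      push_neg at hcon
      have h4 : e ξ ≤ e η₀ := he.monotoneOn hξ hη₀ hcon
      rw [hη₀e] at h4
      exact absurd hlt (not_lt.2 h4)
    have h5 : e η₀ < s := hstep η₀ hη₀ξ
    rw [hη₀e] at h5
    exact lt_irrefl s h5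
  · exact heq

theorem clubIn_pullback {α θo : Ordinal.{u}} {Cα D' : Set Ordinal.{u}} (hθol : Order.IsSuccLimit θo)
    (hC : ClubIn Cα α) (hD : ClubIn D' α) (hD'sub : D' ⊆ Cα)
    {e : Ordinal.{u} → Ordinal.{u}} (he : StrictMonoOn e (Set.Iio θo))
    (him : e '' Set.Iio θo = Cα) :
    ClubIn {ζ | ζ < θo ∧ e ζ ∈ D'} θo := by
  have hemem : ∀ η < θo, e η ∈ Cα := fun η hη => him ▸ Set.mem_image_of_mem e hη
  have heα : ∀ η < θo, e η < α := fun η hη => hC.1 (hemem η hη)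
  refine ⟨fun ζ hζ => hζ.1, ?_, ?_⟩
  · intro ζ hζ hζ0 hU
    have hζl : Order.IsSuccLimit ζ := by
      refine Ordinal.isSuccLimit_iff.2 ⟨hζ0.ne', isSuccPrelimit_of_succ_lt fun x hx => ?_⟩
      obtain ⟨γ, _, h1, h2⟩ := hU x hx
      exact lt_of_le_of_lt (succ_le_of_lt h1) h2
    have hbs : Ordinal.bsup.{u,u} ζ (fun η _ => e η) = e ζ := enum_bsup hC he him hζ hζl
    refine ⟨hζ, hD.2.1 (e ζ) (heα ζ hζ) ?_ ?_⟩
    · have h0 : e 0 < e ζ := he (Set.mem_Iio.2 (hζl.pos.trans hζ)) hζ hζl.pos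
      exact lt_of_le_of_lt (zero_le (a := _)) h0
    · intro z hz
      rw [← hbs] at hz
      obtain ⟨η, hη, hzη⟩ := (Ordinal.lt_bsup _).1 hz
      obtain ⟨γ, hγB, hηγ, hγζ⟩ := hU η hη
      refine ⟨e γ, hγB.2, hzη.trans_le (he.monotoneOn (Set.mem_Iio.2 (hη.trans hζ))
        (Set.mem_Iio.2 (hγζ.trans hζ)) hηγ.le), ?_⟩
      exact he (Set.mem_Iio.2 (hγζ.trans hζ)) hζ hγζ
  · intro x hx
    obtain ⟨d, hd, hxd, hdα⟩ := hD.2.2 (e x) (heα x hx)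
    have hdC : d ∈ Cα := hD'sub hd
    rw [← him] at hdC
    obtain ⟨ζ, hζ, hζe⟩ := hdC
    refine ⟨ζ, ⟨hζ, by rw [hζe]; exact hd⟩, ?_, hζ⟩
    by_contra hcon
    push_neg at hcon
    have h4 : e ζ ≤ e x := he.monotoneOn hζ hx hcon
    rw [hζe] at h4
    exact absurd hxd (not_lt.2 h4)

theorem key_reflect {μ θ : Cardinal.{u}} (hμ : μ.IsRegular) (hθ : θ.IsRegular) (hμθ : μ < θ)
    {α : Ordinal.{u}} (hαcof : α.cof = θ)
    {Cα : Set Ordinal.{u}} (hC : ClubIn Cα α)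
    {e : Ordinal.{u} → Ordinal.{u}} (he : StrictMonoOn e (Set.Iio θ.ord))
    (him : e '' Set.Iio θ.ord = Cα)
    {A : Set Ordinal.{u}} (hA : A ⊆ Ecof θ.ord μ) (hAstat : StatIn A θ.ord)
    {D : Set Ordinal.{u}} (hD : ClubIn D α) :
    ∃ β ∈ D, β < α ∧ β.cof = μ ∧ β ∈ accSet Cα ∧ otp (Cα ∩ Set.Iio β) ∈ A := by
  have hθω : ℵ₀ < θ := lt_of_le_of_lt hμ.aleph0_le hμθ
  have hθordl : Order.IsSuccLimit θ.ord := isSuccLimit_ord hθ.aleph0_le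
  have hαω : ℵ₀ < α.cof := by rw [hαcof]; exact hθω
  have hD' : ClubIn (D ∩ Cα) α := clubIn_inter hαω hD hC
  have hB := clubIn_pullback hθordl hC hD' Set.inter_subset_right he him
  obtain ⟨ξ, hξA, hξB⟩ := hAstat _ hB
  have hξθ : ξ < θ.ord := hξB.1
  have hξcof : ξ.cof = μ := (hA hξA).2
  have hξl : Order.IsSuccLimit ξ := Ordinal.aleph0_le_cof.1 (by rw [hξcof]; exact hμ.aleph0_le)
  have hemem : ∀ η < θ.ord, e η ∈ Cα := fun η hη => him ▸ Set.mem_image_of_mem e hη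
  have hβα : e ξ < α := hC.1 (hemem ξ hξθ)
  have hstep : ∀ η < ξ, e η < e ξ :=
    fun η hη => he (Set.mem_Iio.2 (hη.trans hξθ)) hξθ hη
  have hbs : Ordinal.bsup.{u,u} ξ (fun η _ => e η) = e ξ := enum_bsup hC he him hξθ hξl
  have hunb : UnbIn Cα (e ξ) := by
    intro z hz
    rw [← hbs] at hz
    obtain ⟨η, hη, hzη⟩ := (Ordinal.lt_bsup _).1 hz
    exact ⟨e η, hemem η (hη.trans hξθ), hzη, hstep η hη⟩
  have h0 : 0 < e ξ := lt_of_le_of_lt (zero_le (a := e 0)) (hstep 0 hξl.pos)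
  have hβcof : (e ξ).cof = μ := by
    rw [← hbs, cof_bsup_eq hξl fun j hj k hk hjk =>
      he (Set.mem_Iio.2 (hj.trans hξθ)) (Set.mem_Iio.2 (hk.trans hξθ)) hjk, hξcof]
  have himξ : e '' Set.Iio ξ = Cα ∩ Set.Iio (e ξ) := by
    ext z
    constructor
    · rintro ⟨η, hη, rfl⟩
      exact ⟨hemem η ((Set.mem_Iio.1 hη).trans hξθ), hstep η hη⟩
    · rintro ⟨hzC, hzβ⟩
      rw [← him] at hzC
      obtain ⟨η, hη, rfl⟩ := hzC
      refine ⟨η, ?_, rfl⟩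
      by_contra hcon
      exact absurd hzβ (not_lt.2 (he.monotoneOn hξθ hη (not_lt.1 fun h => hcon h)))
  have hotpξ : otp (Cα ∩ Set.Iio (e ξ)) = ξ :=
    otp_eq_of (he.mono fun z hz => Set.mem_Iio.2 ((Set.mem_Iio.1 hz).trans hξθ)) himξ
  refine ⟨e ξ, hξB.2.1, hβα, hβcof, ⟨hemem ξ hξθ, h0, hunb⟩, ?_⟩
  rw [hotpξ]
  exact hξA


set_option maxHeartbeats 1000000 in
theorem statement5 (μ θ lam : Cardinal)
    (hμ : μ.IsRegular) (hθ : θ.IsRegular) (hlam : lam.IsRegular)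
    (hμθ : μ < θ) (hθlam : θ < lam)
    (Γ : Set Ordinal) (C : Ordinal → Set Ordinal)
    (hΓ : Γ ⊆ {α | α < (Order.succ lam).ord ∧ Order.IsSuccLimit α})
    (hclub : ∀ α ∈ Γ, ClubIn (C α) α)
    (hcoh : ∀ α ∈ Γ, ∀ β ∈ accSet (C α), β ∈ Γ ∧ C β = C α ∩ Set.Iio β)
    (T : Set Ordinal) (hT : T ⊆ Ecof (Order.succ lam).ord θ)
    (hT1 : StatIn {α ∈ Γ ∩ T | otp (C α) = θ.ord} (Order.succ lam).ord) :
    Prt (Order.succ lam).ord (Ecof (Order.succ lam).ord μ) θ T := by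
  classical
  have hθω : ℵ₀ < θ := lt_of_le_of_lt hμ.aleph0_le hμθ
  have hθordl : Order.IsSuccLimit θ.ord := isSuccLimit_ord hθ.aleph0_le
  set κ' := (Order.succ lam).ord with hκ'def
  obtain ⟨A, hA1, hA2, hA3⟩ := solovay hμ hθ hμθ
  set Q : Ordinal → Set Ordinal := fun i =>
    {β | β ∈ Ecof κ' μ ∧ β ∈ Γ ∧ otp (C β) ∈ A i} with hQdef
  have hQdisj : ∀ i, i ∈ Set.Iio θ.ord → ∀ j, j ∈ Set.Iio θ.ord → i ≠ j →
      ∀ β, β ∈ Q i → β ∈ Q j → False := by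
    intro i hi j hj hij β hβi hβj
    exact Set.disjoint_left.1 (hA3 hi hj hij) hβi.2.2 hβj.2.2
  set P : Ordinal → Set Ordinal := fun i =>
    if i = 0 then Ecof κ' μ \ {β | ∃ j, 0 < j ∧ j < θ.ord ∧ β ∈ Q j} else Q i with hPdef
  have hP0 : P 0 = Ecof κ' μ \ {β | ∃ j, 0 < j ∧ j < θ.ord ∧ β ∈ Q j} := if_pos rfl
  have hPne : ∀ i, i ≠ 0 → P i = Q i := fun i hi => if_neg hi
  have hPsub : ∀ i < θ.ord, P i ⊆ Ecof κ' μ := by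
    intro i hi β hβ
    by_cases h0 : i = 0
    · rw [h0, hP0] at hβ; exact hβ.1
    · rw [hPne i h0] at hβ; exact hβ.1
  have hQP : ∀ i < θ.ord, Q i ⊆ P i := by
    intro i hi β hβ
    by_cases h0 : i = 0
    · rw [h0] at hβ ⊢
      rw [hP0]
      refine ⟨hβ.1, ?_⟩
      rintro ⟨j, hj0, hjθ, hβj⟩
      exact hQdisj 0 (Set.mem_Iio.2 hθordl.pos) j (Set.mem_Iio.2 hjθ) (ne_of_lt hj0) β hβ hβj
    · rw [hPne i h0]; exact hβ
  refine ⟨P, fun i hi => hPsub i hi, ?_, ?_, ?_⟩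
  · intro i hi j hj hij
    refine Set.disjoint_left.2 fun {β} hβi hβj => ?_
    by_cases h0i : i = 0
    · have h0j : j ≠ 0 := by rw [h0i] at hij; exact (Ne.symm hij)
      rw [h0i, hP0] at hβi
      rw [hPne j h0j] at hβj
      exact hβi.2 ⟨j, pos_iff_ne_zero.2 h0j, hj, hβj⟩
    · by_cases h0j : j = 0
      · rw [h0j, hP0] at hβj
        rw [hPne i h0i] at hβi
        exact hβj.2 ⟨i, pos_iff_ne_zero.2 h0i, hi, hβi⟩
      · rw [hPne i h0i] at hβi
        rw [hPne j h0j] at hβj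
        exact hQdisj i hi j hj hij β hβi hβj
  · intro β hβ
    by_cases hex : ∃ j, 0 < j ∧ j < θ.ord ∧ β ∈ Q j
    · obtain ⟨j, hj0, hjθ, hβj⟩ := hex
      refine Set.mem_biUnion (Set.mem_Iio.2 hjθ) ?_
      rw [hPne j (pos_iff_ne_zero.1 hj0)]
      exact hβj
    · refine Set.mem_biUnion (Set.mem_Iio.2 hθordl.pos) ?_
      rw [hP0]
      exact ⟨hβ, hex⟩
  · refine statIn_mono ?_ hT1
    rintro α ⟨⟨hαΓ, hαT⟩, hotpα⟩
    have hακ' : α < κ' := (hΓ hαΓ).1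
    have hαcof : α.cof = θ := (hT hαT).2
    refine ⟨hαT, ?_⟩
    rw [Set.mem_iInter₂]
    intro i hi
    obtain ⟨e, he, him⟩ := otp_enum (x := C α) (b := α) fun y hy => (hclub α hαΓ).1 hy
    rw [hotpα] at he him
    refine ⟨hακ', by rw [hαcof]; exact hθω, ?_⟩
    intro D hD
    obtain ⟨β, hβD, hβα, hβcof, hβacc, hβotp⟩ :=
      key_reflect hμ hθ hμθ hαcof (hclub α hαΓ) he him (hA1 i hi) (hA2 i hi) hD
    have hcohβ := hcoh α hαΓ β hβacc
    refine ⟨β, ⟨?_, hβα⟩, hβD⟩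
    refine hQP i hi ?_
    exact ⟨⟨hβα.trans hακ', hβcof⟩, hcohβ.1, by rw [hcohβ.2]; exact hβotp⟩
end

section
/- Suppose ν < κ are regular uncountable cardinals, α < κ with cf(α) = ν, f : κ → ν is a function, and for each i < ν, c^i_α is a club in α disjoint from f^{-1}{i}. Then there exists a club c ⊆ α on which f is strictly increasing. -/
open Cardinal Set Ordinal

section Aux

open Ordinal

/-- The intersection of fewer than `cof α` clubs in `α` (of uncountable cofinality)
is a club in `α`. -/
theorem clubIn_biInter_aux (α : Ordinal) (hcof : Cardinal.aleph0 < α.cof)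
    (δ : Ordinal) (hδ : δ.card < α.cof)
    (D : Ordinal → Set Ordinal) (hD : ∀ i < δ, ClubIn (D i) α) :
    ClubIn (Set.Iio α ∩ ⋂ i ∈ Set.Iio δ, D i) α := by
  have hαlim : Order.IsSuccLimit α := Ordinal.aleph0_le_cof.mp hcof.le
  refine ⟨Set.inter_subset_left, ?_, ?_⟩
  · intro β hβ hβ0 hu
    refine ⟨hβ, Set.mem_iInter₂.mpr fun i hi => ?_⟩
    refine (hD i hi).2.1 β hβ hβ0 fun y hy => ?_
    obtain ⟨γ, hγ, h1, h2⟩ := hu y hy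
    exact ⟨γ, Set.mem_iInter₂.mp hγ.2 i hi, h1, h2⟩
  · intro β hβ
    set next : Ordinal → Ordinal → Ordinal := fun i x => sInf (D i ∩ Set.Ioo x α) with hnext
    have hnextmem : ∀ i < δ, ∀ x < α, next i x ∈ D i ∩ Set.Ioo x α := by
      intro i hi x hx
      apply csInf_mem
      obtain ⟨γ, hγ, h1, h2⟩ := (hD i hi).2.2 x hx
      exact ⟨γ, hγ, h1, h2⟩
    set step : Ordinal → Ordinal := fun x => max (x + 1) (Ordinal.bsup δ (fun i _ => next i x))
      with hstep
    have hstep_gt : ∀ x, x < step x := fun x =>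
      lt_max_of_lt_left (by rw [Ordinal.add_one_eq_succ]; exact Order.lt_succ x)
    have hstep_lt : ∀ x < α, step x < α := by
      intro x hx
      apply max_lt
      · rw [Ordinal.add_one_eq_succ]; exact hαlim.succ_lt hx
      · exact Ordinal.bsup_lt_ord hδ fun i hi => (hnextmem i hi x hx).2.2
    set chain : ℕ → Ordinal := fun n => step^[n] β with hchain
    have hchain_succ : ∀ n, chain (n + 1) = step (chain n) := fun n =>
      Function.iterate_succ_apply' step n β
    have hchain_lt : ∀ n, chain n < α := by
      intro n
      induction n with
      | zero => exact hβ
      | succ n ih => rw [hchain_succ]; exact hstep_lt _ ih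
    have hchain_mono : StrictMono chain :=
      strictMono_nat_of_lt_succ fun n => by rw [hchain_succ]; exact hstep_gt _
    have hx_lt : iSup chain < α :=
      Ordinal.iSup_lt_ord_lift (by rw [Cardinal.mk_nat, Cardinal.lift_aleph0]; exact hcof) hchain_lt
    set x := iSup chain with hxdef
    have hle : ∀ n, chain n ≤ x := Ordinal.le_iSup chain
    have hβx : β < x := by
      have h01 : chain 0 < chain 1 := hchain_mono Nat.zero_lt_one
      calc β = chain 0 := rfl
        _ < chain 1 := h01
        _ ≤ x := hle 1
    have hx0 : 0 < x := lt_of_le_of_lt (zero_le (a := β)) hβx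
    have hexists : ∀ y < x, ∃ n, y < chain n := by
      intro y hy
      by_contra h
      push_neg at h
      exact hy.not_ge (ciSup_le h)
    refine ⟨x, ⟨hx_lt, Set.mem_iInter₂.mpr fun i hi => ?_⟩, hβx, hx_lt⟩
    refine (hD i hi).2.1 x hx_lt hx0 fun y hy => ?_
    obtain ⟨n, hn⟩ := hexists y hy
    have hmem := hnextmem i hi (chain n) (hchain_lt n)
    refine ⟨next i (chain n), hmem.1, hn.trans hmem.2.1, ?_⟩
    have h1 : next i (chain n) ≤ chain (n + 1) := by
      rw [hchain_succ]
      exact le_max_of_le_right (Ordinal.le_bsup (fun i _ => next i (chain n)) i hi)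
    exact lt_of_le_of_lt h1 (lt_of_lt_of_le (hchain_mono (Nat.lt_succ_self (n + 1))) (hle (n + 2)))

open Classical in
/-- Recursion body for the club construction. -/
noncomputable def auxF (α : Ordinal) (G : Ordinal → Ordinal) (d : Ordinal → Set Ordinal) :
    ∀ j : Ordinal, (∀ k, k < j → Ordinal) → Ordinal := fun j IH =>
  if Order.IsSuccLimit j then Ordinal.bsup j IH
  else sInf ({x | Ordinal.bsup j IH < x ∧ Ordinal.bsup j (fun j' _ => G j') < x ∧ x < α} ∩
    ⋂ j' : Set.Iio j, d (IH j'.1 j'.2))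

noncomputable def auxb (α : Ordinal) (G : Ordinal → Ordinal) (d : Ordinal → Set Ordinal) :
    Ordinal → Ordinal := Ordinal.lt_wf.fix (auxF α G d)

theorem auxb_eq (α : Ordinal) (G : Ordinal → Ordinal) (d : Ordinal → Set Ordinal) (j : Ordinal) :
    auxb α G d j = auxF α G d j (fun k _ => auxb α G d k) :=
  WellFounded.fix_eq _ _ j

end Aux

theorem statement9 (ν κ : Cardinal) (hν : ν.IsRegular) (hνu : Cardinal.aleph0 < ν)
    (hκ : κ.IsRegular) (hκu : Cardinal.aleph0 < κ) (hνκ : ν < κ)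
    (α : Ordinal) (hακ : α < κ.ord) (hα : α.cof = ν)
    (f : Ordinal → Ordinal) (hf : ∀ β < κ.ord, f β < ν.ord)
    (c : Ordinal → Set Ordinal)
    (hc : ∀ i < ν.ord, ClubIn (c i) α ∧ Disjoint (c i) {β | f β = i}) :
    ∃ C, ClubIn C α ∧ StrictMonoOn f C := by
  classical
  have hνale : Cardinal.aleph0 ≤ ν := hνu.le
  have hcofα : Cardinal.aleph0 < α.cof := by rw [hα]; exact hνu
  have hαlim : Order.IsSuccLimit α := Ordinal.aleph0_le_cof.mp hcofα.le
  have hνord_lim : Order.IsSuccLimit ν.ord := Cardinal.isSuccLimit_ord hνale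
  have hordeq : α.cof.ord = ν.ord := by rw [hα]
  have hfν : ∀ γ < α, f γ < ν.ord := fun γ hγ => hf γ (hγ.trans hακ)
  -- the clubs `d γ = ⋂ i ≤ f γ, c i`
  set d : Ordinal → Set Ordinal := fun γ => Set.Iio α ∩ ⋂ i ∈ Set.Iio (f γ + 1), c i with hd_def
  have hd : ∀ γ < α, ClubIn (d γ) α := by
    intro γ hγ
    have hsucc : f γ + 1 < ν.ord := by
      rw [Ordinal.add_one_eq_succ]; exact hνord_lim.succ_lt (hfν γ hγ)
    simp only [hd_def]
    refine clubIn_biInter_aux α hcofα (f γ + 1) ?_ c ?_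
    · rw [hα]; exact Cardinal.lt_ord.mp hsucc
    · intro i hi
      exact (hc i (hi.trans hsucc)).1
  -- cofinal function `G`
  obtain ⟨F0, hF0⟩ := Ordinal.exists_fundamental_sequence α
  set G : Ordinal → Ordinal := fun j => if h : j < α.cof.ord then F0 j h else 0 with hG_def
  have hG1 : ∀ j < ν.ord, G j < α := by
    intro j hj
    have hj' : j < α.cof.ord := hordeq ▸ hj
    simp only [hG_def, dif_pos hj']
    exact hF0.lt hj'
  have hG2 : ∀ x < α, ∃ j < ν.ord, x ≤ G j := by
    intro x hx
    have hxb : x < Ordinal.blsub α.cof.ord F0 := by rw [hF0.2.2]; exact hx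
    obtain ⟨j, hj, hle⟩ := Ordinal.lt_blsub_iff.mp hxb
    refine ⟨j, hordeq ▸ hj, ?_⟩
    simp only [hG_def, dif_pos hj]
    exact hle
  -- the recursive sequence
  set b : Ordinal → Ordinal := auxb α G d with hb_def
  have hb : ∀ j, b j = auxF α G d j (fun k _ => b k) := fun j => auxb_eq α G d j
  have key : ∀ j, j < ν.ord →
      b j < α ∧ (∀ j' < j, b j' < b j) ∧ (∀ j' < j, b j ∈ d (b j')) ∧
      (¬ Order.IsSuccLimit j → ∀ j' < j, G j' < b j) := by
    intro j
    induction j using Ordinal.induction with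
    | h j IH =>
    intro hj
    have hjcard : j.card < α.cof := by rw [hα]; exact Cardinal.lt_ord.mp hj
    have hbsup_lt : Ordinal.bsup j (fun k _ => b k) < α :=
      Ordinal.bsup_lt_ord hjcard fun k hk => (IH k hk (hk.trans hj)).1
    by_cases hlim : Order.IsSuccLimit j
    · have hbj : b j = Ordinal.bsup j (fun k _ => b k) := by
        rw [hb j]; simp only [auxF]; rw [if_pos hlim]
      have h2 : ∀ j' < j, b j' < b j := by
        intro j' hj'
        have hsucc : j' + 1 < j := by rw [Ordinal.add_one_eq_succ]; exact hlim.succ_lt hj'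
        have ha : b j' < b (j' + 1) :=
          (IH (j' + 1) hsucc (hsucc.trans hj)).2.1 j'
            (by rw [Ordinal.add_one_eq_succ]; exact Order.lt_succ j')
        have hbb : b (j' + 1) ≤ b j := by
          rw [hbj]; exact Ordinal.le_bsup (fun k _ => b k) (j' + 1) hsucc
        exact ha.trans_le hbb
      have h1 : b j < α := by rw [hbj]; exact hbsup_lt
      have h0 : 0 < b j := lt_of_le_of_lt (zero_le (a := b 0)) (h2 0 hlim.pos)
      have h3 : ∀ j' < j, b j ∈ d (b j') := by
        intro j' hj'
        have hbj' : b j' < α := (IH j' hj' (hj'.trans hj)).1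
        refine (hd (b j') hbj').2.1 (b j) h1 h0 fun y hy => ?_
        rw [hbj] at hy
        obtain ⟨j₂, hj₂, hy2⟩ := (Ordinal.lt_bsup (fun k _ => b k)).mp hy
        have hj₃lt : max j₂ j' < j := max_lt hj₂ hj'
        have hj₄ : max j₂ j' + 1 < j := by rw [Ordinal.add_one_eq_succ]; exact hlim.succ_lt hj₃lt
        have hlt₃ : max j₂ j' < max j₂ j' + 1 := by
          rw [Ordinal.add_one_eq_succ]; exact Order.lt_succ _
        have hkey := IH (max j₂ j' + 1) hj₄ (hj₄.trans hj)
        have hmem : b (max j₂ j' + 1) ∈ d (b j') :=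
          hkey.2.2.1 j' (lt_of_le_of_lt (le_max_right j₂ j') hlt₃)
        have hb23 : b j₂ ≤ b (max j₂ j') := by
          rcases lt_or_eq_of_le (le_max_left j₂ j') with h | h
          · exact ((IH (max j₂ j') hj₃lt (hj₃lt.trans hj)).2.1 j₂ h).le
          · rw [← h]
        have hgt : y < b (max j₂ j' + 1) :=
          lt_of_lt_of_le hy2 (hb23.trans (hkey.2.1 (max j₂ j') hlt₃).le)
        exact ⟨b (max j₂ j' + 1), hmem, hgt, h2 (max j₂ j' + 1) hj₄⟩
      exact ⟨h1, h2, h3, fun h => absurd hlim h⟩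
    · have hGsup_lt : Ordinal.bsup j (fun j' _ => G j') < α :=
        Ordinal.bsup_lt_ord hjcard fun k hk => hG1 k (hk.trans hj)
      have hclub : ClubIn (Set.Iio α ∩ ⋂ j' ∈ Set.Iio j, d (b j')) α := by
        refine clubIn_biInter_aux α hcofα j hjcard _ fun j' hj' => ?_
        exact hd (b j') (IH j' hj' (hj'.trans hj)).1
      set β₀ := max (Ordinal.bsup j (fun k _ => b k)) (Ordinal.bsup j (fun j' _ => G j'))
        with hβ₀def
      have hβ₀lt : β₀ < α := max_lt hbsup_lt hGsup_lt
      obtain ⟨γ, hγmem, hγ1, hγ2⟩ := hclub.2.2 β₀ hβ₀lt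
      have hγT : γ ∈ ({x | Ordinal.bsup j (fun k _ => b k) < x ∧
          Ordinal.bsup j (fun j' _ => G j') < x ∧ x < α} ∩
          ⋂ j' : Set.Iio j, d (b j'.1)) := by
        refine ⟨⟨lt_of_le_of_lt (le_max_left _ _) hγ1,
          lt_of_le_of_lt (le_max_right _ _) hγ1, hγ2⟩, ?_⟩
        exact Set.mem_iInter.mpr fun j' => Set.mem_iInter₂.mp hγmem.2 j'.1 j'.2
      have hbj : b j = sInf ({x | Ordinal.bsup j (fun k _ => b k) < x ∧
          Ordinal.bsup j (fun j' _ => G j') < x ∧ x < α} ∩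
          ⋂ j' : Set.Iio j, d (b j'.1)) := by
        rw [hb j]; simp only [auxF]; rw [if_neg hlim]
      have hmemT : b j ∈ ({x | Ordinal.bsup j (fun k _ => b k) < x ∧
          Ordinal.bsup j (fun j' _ => G j') < x ∧ x < α} ∩
          ⋂ j' : Set.Iio j, d (b j'.1)) := by
        rw [hbj]; exact csInf_mem ⟨γ, hγT⟩
      refine ⟨hmemT.1.2.2, ?_, ?_, ?_⟩
      · intro j' hj'
        exact lt_of_le_of_lt (Ordinal.le_bsup (fun k _ => b k) j' hj') hmemT.1.1
      · intro j' hj'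
        exact Set.mem_iInter.mp hmemT.2 ⟨j', hj'⟩
      · intro _ j' hj'
        exact lt_of_le_of_lt (Ordinal.le_bsup (fun j' _ => G j') j' hj') hmemT.1.2.1
  have hmono : ∀ {j₁ j₂}, j₁ < ν.ord → j₂ < ν.ord → j₁ ≤ j₂ → b j₁ ≤ b j₂ := by
    intro j₁ j₂ h1 h2 hle
    rcases lt_or_eq_of_le hle with h | h
    · exact ((key j₂ h2).2.1 j₁ h).le
    · rw [h]
  have hUnb : UnbIn (b '' Set.Iio ν.ord) α := by
    intro β hβ
    obtain ⟨j, hj, hle⟩ := hG2 β hβ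
    have hj1 : j + 1 < ν.ord := by rw [Ordinal.add_one_eq_succ]; exact hνord_lim.succ_lt hj
    have hnl : ¬Order.IsSuccLimit (j + 1) := by
      rw [Ordinal.add_one_eq_succ]; exact Order.not_isSuccLimit_succ j
    have hlt : G j < b (j + 1) := (key (j + 1) hj1).2.2.2 hnl j
      (by rw [Ordinal.add_one_eq_succ]; exact Order.lt_succ j)
    exact ⟨b (j + 1), ⟨j + 1, hj1, rfl⟩, lt_of_le_of_lt hle hlt, (key (j + 1) hj1).1⟩
  refine ⟨b '' Set.Iio ν.ord, ⟨?_, ?_, hUnb⟩, ?_⟩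
  · rintro x ⟨j, hj, rfl⟩
    exact (key j hj).1
  · -- closed
    intro β hβ hβ0 hu
    have hne : Set.Nonempty {j | j < ν.ord ∧ β ≤ b j} := by
      obtain ⟨γ, ⟨j, hj, rfl⟩, h1, _⟩ := hUnb β hβ
      exact ⟨j, hj, h1.le⟩
    set j₀ := sInf {j | j < ν.ord ∧ β ≤ b j} with hj₀def
    have hj₀mem : j₀ < ν.ord ∧ β ≤ b j₀ := csInf_mem hne
    have hmin : ∀ j < j₀, b j < β := by
      intro j hjj
      by_contra h
      push_neg at h
      have : j₀ ≤ j := csInf_le (OrderBot.bddBelow _) ⟨hjj.trans hj₀mem.1, h⟩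
      exact absurd hjj this.not_gt
    have hlt_of_blt : ∀ j, j < ν.ord → b j < β → j < j₀ := by
      intro j hj hbj
      by_contra h
      push_neg at h
      exact (hj₀mem.2.trans (hmono hj₀mem.1 hj h)).not_gt hbj
    have hj₀pos : 0 < j₀ := by
      obtain ⟨γ, ⟨j, hj, rfl⟩, h1, h2⟩ := hu 0 hβ0
      exact lt_of_le_of_lt (zero_le (a := j)) (hlt_of_blt j hj h2)
    have hj₀lim : Order.IsSuccLimit j₀ := by
      rcases Ordinal.zero_or_succ_or_isSuccLimit j₀ with h | ⟨k, hk⟩ | h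
      · exact absurd h hj₀pos.ne'
      · exfalso
        have hkj₀ : k < j₀ := by rw [← hk]; exact Order.lt_succ k
        have hkν : k < ν.ord := hkj₀.trans hj₀mem.1
        obtain ⟨γ, ⟨j, hj, rfl⟩, h1, h2⟩ := hu (b k) (hmin k hkj₀)
        have hjlt : j < j₀ := hlt_of_blt j hj h2
        have hkj : k < j := by
          by_contra h
          push_neg at h
          exact (hmono hj hkν h).not_gt h1
        rw [← hk] at hjlt
        exact absurd hkj (Order.lt_succ_iff.mp hjlt).not_gt
      · exact h
    have hbj₀ : b j₀ = Ordinal.bsup j₀ (fun k _ => b k) := by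
      rw [hb j₀]; simp only [auxF]; rw [if_pos hj₀lim]
    have hle1 : b j₀ ≤ β := by
      rw [hbj₀]; exact Ordinal.bsup_le fun k hk => (hmin k hk).le
    exact ⟨j₀, hj₀mem.1, le_antisymm hle1 hj₀mem.2⟩
  · -- strict monotonicity of f
    rintro x ⟨j₁, hj₁, rfl⟩ y ⟨j₂, hj₂, rfl⟩ hlt
    have hj : j₁ < j₂ := by
      by_contra h
      push_neg at h
      exact (hmono hj₂ hj₁ h).not_gt hlt
    have hmem : b j₂ ∈ d (b j₁) := (key j₂ hj₂).2.2.1 j₁ hj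
    by_contra hnot
    push_neg at hnot
    have hi : f (b j₂) < f (b j₁) + 1 := by
      rw [Ordinal.add_one_eq_succ]; exact Order.lt_succ_iff.mpr hnot
    simp only [hd_def] at hmem
    have hmem2 : b j₂ ∈ c (f (b j₂)) := Set.mem_iInter₂.mp hmem.2 _ hi
    have hiν : f (b j₂) < ν.ord := hfν (b j₂) (key j₂ hj₂).1
    exact Set.disjoint_left.mp (hc _ hiν).2 hmem2 rfl
end
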